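/- arXiv:1307.6242 — 2 statements merged into one kernel-verified Lean document; each statement's English description precedes it below -/
import Mathlib

section
/- Let F be a finite field and let the affine group A_F act by measure preserving transformations on a probability space (Ω,B,μ). If B ∈ B satisfies μ(B) > √(6/|F|), then there exists u ∈ F* with μ(B ∩ M_u A_{-u} B) > 0. -/
open MeasureTheory

set_option linter.unusedSectionVars false
set_option maxHeartbeats 1000000

/-- A measure preserving action of the affine group `A_F` of a field `F` on `(Ω, μ)`. -/
structure AffineAction (F : Type*) [Field F] {Ω : Type*} [MeasurableSpace Ω]
    (μ : Measure Ω) where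
  TA : F → Ω → Ω
  TM : F → Ω → Ω
  TA_zero : TA 0 = id
  TA_add : ∀ u v : F, TA (u + v) = TA u ∘ TA v
  TM_one : TM 1 = id
  TM_mul : ∀ u v : F, u ≠ 0 → v ≠ 0 → TM (u * v) = TM u ∘ TM v
  comm : ∀ u v : F, u ≠ 0 → TM u ∘ TA v = TA (u * v) ∘ TM u
  TA_mp : ∀ u : F, MeasurePreserving (TA u) μ μ
  TM_mp : ∀ u : F, u ≠ 0 → MeasurePreserving (TM u) μ μ

namespace FFRec

variable {F : Type*} [Field F] [Fintype F] [DecidableEq F]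
  {Ω : Type*} [MeasurableSpace Ω] {μ : Measure Ω} [IsProbabilityMeasure μ]

lemma integrable_of_bdd {a : Ω → ℝ} (ha : Measurable a) {C : ℝ} (h : ∀ x, |a x| ≤ C) :
    Integrable a μ :=
  (integrable_const C).mono' ha.aestronglyMeasurable
    (Filter.Eventually.of_forall fun x => by simpa [Real.norm_eq_abs] using h x)

lemma memL2_of_bdd {a : Ω → ℝ} (ha : Measurable a) {C : ℝ} (h : ∀ x, |a x| ≤ C) :
    MemLp a 2 μ :=
  (memLp_top_of_bound ha.aestronglyMeasurable C
    (Filter.Eventually.of_forall fun x => by simpa [Real.norm_eq_abs] using h x)).mono_exponent le_top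

lemma integrable_mul_of_bdd {a b : Ω → ℝ} (ha : Measurable a) (hb : Measurable b)
    {C D : ℝ} (hCa : ∀ x, |a x| ≤ C) (hDb : ∀ x, |b x| ≤ D) :
    Integrable (fun x => a x * b x) μ :=
  integrable_of_bdd (ha.mul hb) (C := C * D) fun x => by
    rw [abs_mul]
    exact mul_le_mul (hCa x) (hDb x) (abs_nonneg _) ((abs_nonneg (a x)).trans (hCa x))

lemma cs_integral {a b : Ω → ℝ} (ha : MemLp a 2 μ) (hb : MemLp b 2 μ) :
    (∫ x, a x * b x ∂μ) ^ 2 ≤ (∫ x, a x ^ 2 ∂μ) * (∫ x, b x ^ 2 ∂μ) := by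
  set A : Lp ℝ 2 μ := ha.toLp a with hA
  set Bb : Lp ℝ 2 μ := hb.toLp b with hBb
  have h1 : (inner ℝ A Bb : ℝ) = ∫ x, a x * b x ∂μ := by
    rw [L2.inner_def]
    refine integral_congr_ae ?_
    filter_upwards [ha.coeFn_toLp, hb.coeFn_toLp] with x hx hy
    simp [hA, hBb, hx, hy, RCLike.inner_apply, mul_comm]
  have h2 : (inner ℝ A A : ℝ) = ∫ x, a x ^ 2 ∂μ := by
    rw [L2.inner_def]
    refine integral_congr_ae ?_
    filter_upwards [ha.coeFn_toLp] with x hx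
    simp [hA, hx, RCLike.inner_apply, sq]
  have h3 : (inner ℝ Bb Bb : ℝ) = ∫ x, b x ^ 2 ∂μ := by
    rw [L2.inner_def]
    refine integral_congr_ae ?_
    filter_upwards [hb.coeFn_toLp] with x hx
    simp [hBb, hx, RCLike.inner_apply, sq]
  have h4 := abs_real_inner_le_norm A Bb
  have h5 : (inner ℝ A Bb : ℝ) ^ 2 ≤ (‖A‖ * ‖Bb‖) ^ 2 := by
    rw [← sq_abs]
    exact pow_le_pow_left₀ (abs_nonneg _) h4 2
  calc (∫ x, a x * b x ∂μ) ^ 2 = (inner ℝ A Bb : ℝ) ^ 2 := by rw [h1]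
    _ ≤ (‖A‖ * ‖Bb‖) ^ 2 := h5
    _ = ‖A‖ ^ 2 * ‖Bb‖ ^ 2 := by ring
    _ = (∫ x, a x ^ 2 ∂μ) * (∫ x, b x ^ 2 ∂μ) := by
        rw [← h2, ← h3, real_inner_self_eq_norm_sq, real_inner_self_eq_norm_sq]

lemma int_comp {T : Ω → Ω} (hT : MeasurePreserving T μ μ) {h : Ω → ℝ}
    (hh : AEStronglyMeasurable h μ) : ∫ x, h (T x) ∂μ = ∫ x, h x ∂μ := by
  calc ∫ x, h (T x) ∂μ = ∫ y, h y ∂(Measure.map T μ) :=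
        (integral_map hT.measurable.aemeasurable (by rwa [hT.map_eq])).symm
    _ = ∫ x, h x ∂μ := by rw [hT.map_eq]

lemma sum_units_val (A : F → ℝ) : ∑ c : Fˣ, A ↑c = (∑ a : F, A a) - A 0 := by
  have h1 : ∑ c : Fˣ, A ↑c = ∑ s : {a : F // a ≠ 0}, A ↑s :=
    Fintype.sum_equiv unitsEquivNeZero _ _ (fun c => by simp)
  have h2 : ∑ a ∈ Finset.univ.erase (0 : F), A a = ∑ s : {a : F // a ≠ 0}, A ↑s :=
    Finset.sum_subtype _ (by simp) A
  have h3 : (∑ a ∈ Finset.univ.erase (0 : F), A a) + A 0 = ∑ a : F, A a :=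
    Finset.sum_erase_add _ _ (Finset.mem_univ 0)
  rw [h1, ← h2]
  linarith

variable (act : AffineAction F μ) (B : Set Ω)

noncomputable def fB : Ω → ℝ := B.indicator 1

noncomputable def pB : Ω → ℝ :=
  fun x => (Fintype.card F : ℝ)⁻¹ * ∑ v : F, fB B (act.TA v x)

noncomputable def rB : Ω → ℝ :=
  fun x => ((Fintype.card F : ℝ) - 1)⁻¹ * ∑ u : Fˣ, pB act B (act.TM (↑u) x)

noncomputable def gB : Ω → ℝ := fun x => fB B x - pB act B x

noncomputable def hU (u : Fˣ) : Ω → ℝ := fun x => fB B (act.TA (↑u) x) - pB act B x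

noncomputable def GG : Ω → ℝ := fun x => ∑ u : Fˣ, hU act B u (act.TM (↑(u⁻¹)) x)

variable {act B}

lemma TA_pt (u v : F) (x : Ω) : act.TA u (act.TA v x) = act.TA (u + v) x :=
  (congrFun (act.TA_add u v) x).symm

lemma TA_zero_pt (x : Ω) : act.TA 0 x = x := congrFun act.TA_zero x

lemma TM_pt (u v : Fˣ) (x : Ω) :
    act.TM (↑u) (act.TM (↑v) x) = act.TM ((↑u : F) * ↑v) x :=
  (congrFun (act.TM_mul _ _ u.ne_zero v.ne_zero) x).symm

lemma TM_one_pt (x : Ω) : act.TM 1 x = x := congrFun act.TM_one x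

lemma TMinv_pt (u : Fˣ) (x : Ω) : act.TM (↑u) (act.TM (↑(u⁻¹)) x) = x := by
  rw [TM_pt]
  simp [Units.mul_inv, TM_one_pt]

lemma TMinv_pt' (u : Fˣ) (x : Ω) : act.TM (↑(u⁻¹)) (act.TM (↑u) x) = x := by
  rw [TM_pt]
  simp [Units.inv_mul, TM_one_pt]

lemma comm_pt (u : Fˣ) (v : F) (x : Ω) :
    act.TM (↑u) (act.TA v x) = act.TA ((↑u : F) * v) (act.TM (↑u) x) :=
  congrFun (act.comm (↑u) v u.ne_zero) x

lemma pB_TA (v : F) (x : Ω) : pB act B (act.TA v x) = pB act B x := by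
  unfold pB
  congr 1
  refine Fintype.sum_equiv (Equiv.addRight v) _ _ (fun w => ?_)
  rw [TA_pt]
  simp

lemma rB_TM (u : Fˣ) (x : Ω) : rB act B (act.TM (↑u) x) = rB act B x := by
  unfold rB
  congr 1
  refine Fintype.sum_equiv (Equiv.mulRight u) _ _ (fun w => ?_)
  rw [TM_pt]
  simp

lemma rB_TA (v : F) (x : Ω) : rB act B (act.TA v x) = rB act B x := by
  unfold rB
  congr 1
  refine Finset.sum_congr rfl (fun w _ => ?_)
  rw [comm_pt, pB_TA]

lemma sum_fB_TA (x : Ω) :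
    ∑ v : F, fB B (act.TA v x) = (Fintype.card F : ℝ) * pB act B x := by
  unfold pB
  rw [← mul_assoc, mul_inv_cancel₀ (by exact_mod_cast Fintype.card_ne_zero), one_mul]

lemma fB_nonneg (x : Ω) : 0 ≤ fB B x := by
  unfold fB; by_cases hx : x ∈ B <;> simp [Set.indicator, hx]

lemma fB_le_one (x : Ω) : fB B x ≤ 1 := by
  unfold fB; by_cases hx : x ∈ B <;> simp [Set.indicator, hx]

lemma abs_fB_le_one (x : Ω) : |fB B x| ≤ 1 :=
  abs_le.mpr ⟨by linarith [fB_nonneg (B := B) x], fB_le_one x⟩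

lemma pB_nonneg (x : Ω) : 0 ≤ pB act B x :=
  mul_nonneg (by positivity) (Finset.sum_nonneg fun v _ => fB_nonneg _)

lemma pB_le_one (x : Ω) : pB act B x ≤ 1 := by
  unfold pB
  have h1 : ∑ v : F, fB B (act.TA v x) ≤ (Fintype.card F : ℝ) := by
    calc ∑ v : F, fB B (act.TA v x) ≤ ∑ _v : F, (1 : ℝ) :=
          Finset.sum_le_sum fun v _ => fB_le_one _
      _ = (Fintype.card F : ℝ) := by simp
  have hq : (0 : ℝ) < (Fintype.card F : ℝ) := by exact_mod_cast Fintype.card_pos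
  calc (Fintype.card F : ℝ)⁻¹ * ∑ v : F, fB B (act.TA v x)
      ≤ (Fintype.card F : ℝ)⁻¹ * (Fintype.card F : ℝ) :=
        mul_le_mul_of_nonneg_left h1 (by positivity)
    _ = 1 := inv_mul_cancel₀ hq.ne'

lemma abs_pB_le_one (x : Ω) : |pB act B x| ≤ 1 :=
  abs_le.mpr ⟨by linarith [pB_nonneg (act := act) (B := B) x], pB_le_one x⟩

lemma abs_gB_le_one (x : Ω) : |gB act B x| ≤ 1 := by
  unfold gB
  have := fB_nonneg (B := B) x; have := fB_le_one (B := B) x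
  have := pB_nonneg (act := act) (B := B) x; have := pB_le_one (act := act) (B := B) x
  rw [abs_le]; constructor <;> linarith

lemma abs_hU_le_one (u : Fˣ) (x : Ω) : |hU act B u x| ≤ 1 := by
  unfold hU
  have := fB_nonneg (B := B) (act.TA (↑u) x); have := fB_le_one (B := B) (act.TA (↑u) x)
  have := pB_nonneg (act := act) (B := B) x; have := pB_le_one (act := act) (B := B) x
  rw [abs_le]; constructor <;> linarith

lemma abs_rB_le_one (hq : 2 ≤ Fintype.card F) (x : Ω) : |rB act B x| ≤ 1 := by
  unfold rB
  have hc : (Fintype.card Fˣ : ℝ) = (Fintype.card F : ℝ) - 1 := by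
    rw [Fintype.card_units]
    have : (1 : ℕ) ≤ Fintype.card F := by omega
    push_cast [Nat.cast_sub this]
    ring
  have hq1 : (0 : ℝ) < (Fintype.card F : ℝ) - 1 := by
    have : (2 : ℝ) ≤ (Fintype.card F : ℝ) := by exact_mod_cast hq
    linarith
  rw [abs_mul]
  have h1 : |∑ u : Fˣ, pB act B (act.TM (↑u) x)| ≤ (Fintype.card F : ℝ) - 1 := by
    calc |∑ u : Fˣ, pB act B (act.TM (↑u) x)| ≤ ∑ u : Fˣ, |pB act B (act.TM (↑u) x)| :=
          Finset.abs_sum_le_sum_abs _ _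
      _ ≤ ∑ _u : Fˣ, (1 : ℝ) := Finset.sum_le_sum fun u _ => abs_pB_le_one _
      _ = (Fintype.card Fˣ : ℝ) := by simp
      _ = (Fintype.card F : ℝ) - 1 := hc
  calc |((Fintype.card F : ℝ) - 1)⁻¹| * |∑ u : Fˣ, pB act B (act.TM (↑u) x)|
      ≤ |((Fintype.card F : ℝ) - 1)⁻¹| * ((Fintype.card F : ℝ) - 1) :=
        mul_le_mul_of_nonneg_left h1 (abs_nonneg _)
    _ = 1 := by rw [abs_of_pos (by positivity)]; exact inv_mul_cancel₀ hq1.ne'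

lemma abs_GG_le (x : Ω) : |GG act B x| ≤ (Fintype.card Fˣ : ℝ) := by
  unfold GG
  calc |∑ u : Fˣ, hU act B u (act.TM (↑(u⁻¹)) x)|
      ≤ ∑ u : Fˣ, |hU act B u (act.TM (↑(u⁻¹)) x)| := Finset.abs_sum_le_sum_abs _ _
    _ ≤ ∑ _u : Fˣ, (1 : ℝ) := Finset.sum_le_sum fun u _ => abs_hU_le_one _ _
    _ = (Fintype.card Fˣ : ℝ) := by simp

lemma meas_fB (hB : MeasurableSet B) : Measurable (fB B) :=
  measurable_one.indicator hB

lemma meas_pB (hB : MeasurableSet B) : Measurable (pB act B) :=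
  (Finset.measurable_sum _ fun v _ =>
    (meas_fB hB).comp (act.TA_mp v).measurable).const_mul _

lemma meas_rB (hB : MeasurableSet B) : Measurable (rB act B) :=
  (Finset.measurable_sum _ fun (u : Fˣ) _ =>
    (meas_pB hB).comp (act.TM_mp (↑u) (Units.ne_zero u)).measurable).const_mul _

lemma meas_gB (hB : MeasurableSet B) : Measurable (gB act B) :=
  (meas_fB hB).sub (meas_pB hB)

lemma meas_hU (hB : MeasurableSet B) (u : Fˣ) : Measurable (hU act B u) :=
  ((meas_fB hB).comp (act.TA_mp (↑u)).measurable).sub (meas_pB hB)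

lemma meas_GG (hB : MeasurableSet B) : Measurable (GG act B) :=
  Finset.measurable_sum _ fun (u : Fˣ) _ =>
    (meas_hU hB u).comp (act.TM_mp (↑(u⁻¹)) (Units.ne_zero u⁻¹)).measurable


-- ## Integral lemmas

lemma int_fB_comp (hB : MeasurableSet B) {T : Ω → Ω} (hT : MeasurePreserving T μ μ) :
    ∫ x, fB B (T x) ∂μ = (μ B).toReal := by
  rw [int_comp hT (meas_fB hB).aestronglyMeasurable]
  exact integral_indicator_one hB

lemma int_fB (hB : MeasurableSet B) : ∫ x, fB B x ∂μ = (μ B).toReal :=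
  integral_indicator_one hB

lemma integrable_fB_comp (hB : MeasurableSet B) {T : Ω → Ω} (hT : Measurable T) :
    Integrable (fun x => fB B (T x)) μ :=
  integrable_of_bdd ((meas_fB hB).comp hT) (C := 1) fun x => abs_fB_le_one _

lemma int_pB (hB : MeasurableSet B) : ∫ x, pB act B x ∂μ = (μ B).toReal := by
  unfold pB
  rw [integral_const_mul, integral_finset_sum _
    (fun v _ => integrable_fB_comp hB (act.TA_mp v).measurable)]
  have h1 : ∀ v : F, ∫ x, fB B (act.TA v x) ∂μ = (μ B).toReal :=
    fun v => int_fB_comp hB (act.TA_mp v)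
  rw [Finset.sum_congr rfl (fun v _ => h1 v), Finset.sum_const, Finset.card_univ,
    nsmul_eq_mul, ← mul_assoc, inv_mul_cancel₀ (by exact_mod_cast Fintype.card_ne_zero), one_mul]

lemma int_pB_comp (hB : MeasurableSet B) {T : Ω → Ω} (hT : MeasurePreserving T μ μ) :
    ∫ x, pB act B (T x) ∂μ = (μ B).toReal := by
  rw [int_comp hT (meas_pB hB).aestronglyMeasurable]
  exact int_pB hB

lemma card_units_real (hq : 2 ≤ Fintype.card F) :
    (Fintype.card Fˣ : ℝ) = (Fintype.card F : ℝ) - 1 := by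
  rw [Fintype.card_units]
  have h1 : (1 : ℕ) ≤ Fintype.card F := by omega
  push_cast [Nat.cast_sub h1]
  ring

lemma int_rB (hB : MeasurableSet B) (hq : 2 ≤ Fintype.card F) :
    ∫ x, rB act B x ∂μ = (μ B).toReal := by
  unfold rB
  rw [integral_const_mul, integral_finset_sum (μ := μ) Finset.univ
    (f := fun (u : Fˣ) (x : Ω) => pB act B (act.TM (↑u) x)) (fun (u : Fˣ) _ =>
    integrable_of_bdd ((meas_pB hB).comp (act.TM_mp _ (Units.ne_zero u)).measurable)
      (C := 1) fun x => abs_pB_le_one _)]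
  have h1 : ∀ u : Fˣ, ∫ x, pB act B (act.TM (↑u) x) ∂μ = (μ B).toReal :=
    fun u => int_pB_comp hB (act.TM_mp _ (Units.ne_zero u))
  have hq1 : (0 : ℝ) < (Fintype.card F : ℝ) - 1 := by
    have : (2 : ℝ) ≤ (Fintype.card F : ℝ) := by exact_mod_cast hq
    linarith
  rw [Finset.sum_congr rfl (fun u _ => h1 u), Finset.sum_const, Finset.card_univ,
    nsmul_eq_mul, card_units_real hq, ← mul_assoc, inv_mul_cancel₀ hq1.ne', one_mul]

/-- averaging: if `b` is invariant under `T`, then `∫ (a∘T)·b = ∫ a·b`. -/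
lemma int_avg {T : Ω → Ω} (hT : MeasurePreserving T μ μ) {a b : Ω → ℝ}
    (hab : AEStronglyMeasurable (fun x => a x * b x) μ) (hbT : ∀ x, b (T x) = b x) :
    ∫ x, a (T x) * b x ∂μ = ∫ x, a x * b x ∂μ := by
  have h1 : ∫ x, a (T x) * b x ∂μ = ∫ x, a (T x) * b (T x) ∂μ :=
    integral_congr_ae (Filter.Eventually.of_forall fun x => by simp only [hbT])
  rw [h1]
  exact int_comp hT hab


-- ## Claim A : the terms of `S` compute the measures in the conclusion

lemma image_eq_preimage (u : Fˣ) :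
    (act.TM (↑u) ∘ act.TA (-(↑u : F))) '' B
      = (fun x => act.TA (↑u) (act.TM (↑(u⁻¹)) x)) ⁻¹' B := by
  ext x
  constructor
  · rintro ⟨b, hb, rfl⟩
    have : act.TA (↑u) (act.TM (↑(u⁻¹))
        ((act.TM (↑u) ∘ act.TA (-(↑u : F))) b)) = b := by
      simp only [Function.comp_apply]
      rw [TMinv_pt', TA_pt]
      simp [TA_zero_pt]
    show act.TA (↑u) (act.TM (↑(u⁻¹)) ((act.TM (↑u) ∘ act.TA (-(↑u : F))) b)) ∈ B
    rw [this]; exact hb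
  · intro hx
    refine ⟨act.TA (↑u) (act.TM (↑(u⁻¹)) x), hx, ?_⟩
    simp only [Function.comp_apply]
    rw [TA_pt]
    simp only [neg_add_cancel, TA_zero_pt]
    exact TMinv_pt u x

lemma claimA (hB : MeasurableSet B) (u : Fˣ) :
    ∫ x, fB B (act.TM (↑u) x) * fB B (act.TA (↑u) x) ∂μ
      = (μ (B ∩ (act.TM (↑u) ∘ act.TA (-(↑u : F))) '' B)).toReal := by
  have hψ : Measurable (fun x => act.TA (↑u) (act.TM (↑(u⁻¹)) x)) :=
    (act.TA_mp _).measurable.comp (act.TM_mp _ (Units.ne_zero _)).measurable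
  rw [image_eq_preimage]
  have hmeas : MeasurableSet (B ∩ (fun x => act.TA (↑u) (act.TM (↑(u⁻¹)) x)) ⁻¹' B) :=
    hB.inter (hψ hB)
  have h2 : (μ (B ∩ (fun x => act.TA (↑u) (act.TM (↑(u⁻¹)) x)) ⁻¹' B)).toReal
      = ∫ x, fB B x * fB B (act.TA (↑u) (act.TM (↑(u⁻¹)) x)) ∂μ := by
    rw [← Measure.real_def, ← integral_indicator_one hmeas]
    refine integral_congr_ae (Filter.Eventually.of_forall fun x => ?_)
    unfold fB
    by_cases h1 : x ∈ B <;> by_cases h2 : act.TA (↑u) (act.TM (↑(u⁻¹)) x) ∈ B <;>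
      simp only [Units.val_inv_eq_inv_val] at h2 ⊢ <;>
      simp [Set.indicator_apply, Set.mem_inter_iff, Set.mem_preimage, h1, h2]
  rw [h2]
  have h3 := int_comp (act.TM_mp (↑u) (Units.ne_zero u))
    (h := fun x => fB B x * fB B (act.TA (↑u) (act.TM (↑(u⁻¹)) x)))
    (((meas_fB hB).mul ((meas_fB hB).comp hψ)).aestronglyMeasurable)
  rw [← h3]
  refine integral_congr_ae (Filter.Eventually.of_forall fun x => ?_)
  simp only [TMinv_pt']

-- ## The `T1` term

lemma sum_pB_TM (hq : 2 ≤ Fintype.card F) (x : Ω) :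
    ∑ u : Fˣ, pB act B (act.TM (↑u) x) = ((Fintype.card F : ℝ) - 1) * rB act B x := by
  unfold rB
  have hq1 : (0 : ℝ) < (Fintype.card F : ℝ) - 1 := by
    have : (2 : ℝ) ≤ (Fintype.card F : ℝ) := by exact_mod_cast hq
    linarith
  rw [← mul_assoc, mul_inv_cancel₀ hq1.ne', one_mul]

lemma T1_flip (hB : MeasurableSet B) (u : Fˣ) :
    ∫ x, fB B (act.TM (↑u) x) * pB act B x ∂μ
      = ∫ x, fB B x * pB act B (act.TM (↑(u⁻¹)) x) ∂μ := by
  have h3 := int_comp (act.TM_mp (↑(u⁻¹)) (Units.ne_zero u⁻¹))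
    (h := fun x => fB B (act.TM (↑u) x) * pB act B x)
    ((((meas_fB hB).comp (act.TM_mp _ (Units.ne_zero u)).measurable).mul
      (meas_pB hB)).aestronglyMeasurable)
  rw [← h3]
  refine integral_congr_ae (Filter.Eventually.of_forall fun x => ?_)
  simp only [TMinv_pt]

lemma T1_eq (hB : MeasurableSet B) (hq : 2 ≤ Fintype.card F) :
    ∑ u : Fˣ, ∫ x, fB B (act.TM (↑u) x) * pB act B x ∂μ
      = ((Fintype.card F : ℝ) - 1) * ∫ x, fB B x * rB act B x ∂μ := by
  have step1 : ∑ u : Fˣ, ∫ x, fB B (act.TM (↑u) x) * pB act B x ∂μ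
      = ∑ u : Fˣ, ∫ x, fB B x * pB act B (act.TM (↑u) x) ∂μ := by
    rw [Finset.sum_congr rfl (fun (u : Fˣ) _ => T1_flip hB u)]
    exact Fintype.sum_equiv (Equiv.inv Fˣ) _ _ (fun u => by simp)
  rw [step1, ← integral_finset_sum (μ := μ) Finset.univ
    (f := fun (u : Fˣ) (x : Ω) => fB B x * pB act B (act.TM (↑u) x))
    (fun (u : Fˣ) _ => integrable_mul_of_bdd (meas_fB hB)
      ((meas_pB hB).comp (act.TM_mp _ (Units.ne_zero u)).measurable)
      abs_fB_le_one (fun x => abs_pB_le_one _)),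
    ← integral_const_mul]
  refine integral_congr_ae (Filter.Eventually.of_forall fun x => ?_)
  simp only [← Finset.mul_sum, sum_pB_TM hq]
  ring

-- ## averaging identities

lemma int_mul_left_eq {c : Ω → ℝ} (hB : MeasurableSet B) (hc : Measurable c)
    (hcb : ∀ x, |c x| ≤ 1) (hcTA : ∀ v x, c (act.TA v x) = c x) :
    ∫ x, fB B x * c x ∂μ = ∫ x, pB act B x * c x ∂μ := by
  have key : ∀ v : F, ∫ x, fB B (act.TA v x) * c x ∂μ = ∫ x, fB B x * c x ∂μ :=
    fun v => int_avg (act.TA_mp v)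
      (((meas_fB hB).mul hc).aestronglyMeasurable) (hcTA v)
  have expand : ∀ x : Ω, pB act B x * c x
      = (Fintype.card F : ℝ)⁻¹ * ∑ v : F, fB B (act.TA v x) * c x := by
    intro x
    unfold pB
    rw [mul_assoc, Finset.sum_mul]
  calc ∫ x, fB B x * c x ∂μ
      = (Fintype.card F : ℝ)⁻¹ * ∑ v : F, ∫ x, fB B (act.TA v x) * c x ∂μ := by
        rw [Finset.sum_congr rfl (fun v _ => key v), Finset.sum_const, Finset.card_univ,
          nsmul_eq_mul, ← mul_assoc,
          inv_mul_cancel₀ (by exact_mod_cast Fintype.card_ne_zero), one_mul]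
    _ = ∫ x, pB act B x * c x ∂μ := by
        rw [← integral_finset_sum (μ := μ) Finset.univ
          (f := fun (v : F) (x : Ω) => fB B (act.TA v x) * c x)
          (fun (v : F) _ => integrable_mul_of_bdd
            ((meas_fB hB).comp (act.TA_mp v).measurable) hc abs_fB_le_one hcb),
          ← integral_const_mul]
        exact integral_congr_ae (Filter.Eventually.of_forall fun x => (expand x).symm)

lemma int_pr_eq_rr (hB : MeasurableSet B) (hq : 2 ≤ Fintype.card F) :
    ∫ x, pB act B x * rB act B x ∂μ = ∫ x, rB act B x * rB act B x ∂μ := by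
  have key : ∀ u : Fˣ, ∫ x, pB act B (act.TM (↑u) x) * rB act B x ∂μ
      = ∫ x, pB act B x * rB act B x ∂μ :=
    fun u => int_avg (act.TM_mp _ (Units.ne_zero u))
      (((meas_pB hB).mul (meas_rB hB)).aestronglyMeasurable) (rB_TM u)
  have hq1 : (0 : ℝ) < (Fintype.card F : ℝ) - 1 := by
    have : (2 : ℝ) ≤ (Fintype.card F : ℝ) := by exact_mod_cast hq
    linarith
  have expand : ∀ x : Ω, rB act B x * rB act B x
      = ((Fintype.card F : ℝ) - 1)⁻¹ * ∑ u : Fˣ, pB act B (act.TM (↑u) x) * rB act B x := by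
    intro x
    rw [← Finset.sum_mul, sum_pB_TM hq]
    field_simp
  calc ∫ x, pB act B x * rB act B x ∂μ
      = ((Fintype.card F : ℝ) - 1)⁻¹ * ∑ u : Fˣ, ∫ x, pB act B (act.TM (↑u) x) * rB act B x ∂μ := by
        rw [Finset.sum_congr rfl (fun (u : Fˣ) _ => key u), Finset.sum_const, Finset.card_univ,
          nsmul_eq_mul, card_units_real hq, ← mul_assoc, inv_mul_cancel₀ hq1.ne', one_mul]
    _ = ∫ x, rB act B x * rB act B x ∂μ := by
        rw [← integral_finset_sum (μ := μ) Finset.univ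
          (f := fun (u : Fˣ) (x : Ω) => pB act B (act.TM (↑u) x) * rB act B x)
          (fun (u : Fˣ) _ => integrable_mul_of_bdd
            ((meas_pB hB).comp (act.TM_mp _ (Units.ne_zero u)).measurable) (meas_rB hB)
            (fun x => abs_pB_le_one _) (abs_rB_le_one hq)),
          ← integral_const_mul]
        exact integral_congr_ae (Filter.Eventually.of_forall fun x => (expand x).symm)


-- ## `g` estimates

lemma fB_sq (x : Ω) : fB B x * fB B x = fB B x := by
  unfold fB
  by_cases h : x ∈ B <;> simp [Set.indicator_apply, h]

lemma int_gB_sq (hB : MeasurableSet B) :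
    ∫ x, gB act B x ^ 2 ∂μ = (μ B).toReal - ∫ x, fB B x * pB act B x ∂μ := by
  have hfp : Integrable (fun x => fB B x * pB act B x) μ :=
    integrable_mul_of_bdd (meas_fB hB) (meas_pB hB) abs_fB_le_one (fun x => abs_pB_le_one _)
  have hff : Integrable (fun x => fB B x * fB B x) μ :=
    integrable_mul_of_bdd (meas_fB hB) (meas_fB hB) abs_fB_le_one abs_fB_le_one
  have hpp : Integrable (fun x => pB act B x * pB act B x) μ :=
    integrable_mul_of_bdd (meas_pB hB) (meas_pB hB) (fun x => abs_pB_le_one _)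
      (fun x => abs_pB_le_one _)
  have expand : ∀ x : Ω, gB act B x ^ 2
      = fB B x * fB B x - 2 * (fB B x * pB act B x) + pB act B x * pB act B x := by
    intro x; unfold gB; ring
  have h1 : ∫ x, gB act B x ^ 2 ∂μ
      = ∫ x, fB B x * fB B x ∂μ - 2 * ∫ x, fB B x * pB act B x ∂μ
        + ∫ x, pB act B x * pB act B x ∂μ := by
    rw [show (fun x => gB act B x ^ 2) = fun x =>
      fB B x * fB B x - 2 * (fB B x * pB act B x) + pB act B x * pB act B x by
        funext x; exact expand x]
    rw [integral_add (f := fun x => fB B x * fB B x - 2 * (fB B x * pB act B x))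
        (g := fun x => pB act B x * pB act B x) (hff.sub (hfp.const_mul 2)) hpp,
      integral_sub (f := fun x => fB B x * fB B x)
        (g := fun x => 2 * (fB B x * pB act B x)) hff (hfp.const_mul 2),
      integral_const_mul]
  have h2 : ∫ x, fB B x * fB B x ∂μ = (μ B).toReal := by
    rw [show (fun x => fB B x * fB B x) = fB B by funext x; exact fB_sq x]
    exact int_fB hB
  have h3 : ∫ x, fB B x * pB act B x ∂μ = ∫ x, pB act B x * pB act B x ∂μ :=
    int_mul_left_eq hB (meas_pB hB) (fun x => abs_pB_le_one _) pB_TA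
  rw [h1, h2, ← h3]
  ring

lemma int_fp_nonneg (hB : MeasurableSet B) : 0 ≤ ∫ x, fB B x * pB act B x ∂μ :=
  integral_nonneg fun x => mul_nonneg (fB_nonneg x) (pB_nonneg x)

lemma int_gB_sq_nonneg : 0 ≤ ∫ x, gB act B x ^ 2 ∂μ :=
  integral_nonneg fun x => sq_nonneg _

lemma int_gB_sq_le (hB : MeasurableSet B) :
    ∫ x, gB act B x ^ 2 ∂μ ≤ (μ B).toReal := by
  have := int_gB_sq (act := act) hB
  have := int_fp_nonneg (act := act) hB
  linarith

lemma gcorr (hB : MeasurableSet B) (w : Fˣ) :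
    |∫ x, gB act B x * gB act B (act.TM (↑w) x) ∂μ| ≤ ∫ x, gB act B x ^ 2 ∂μ := by
  have hg2 : MemLp (gB act B) 2 μ := memL2_of_bdd (meas_gB hB) abs_gB_le_one
  have hgT : MemLp (fun x => gB act B (act.TM (↑w) x)) 2 μ :=
    memL2_of_bdd ((meas_gB hB).comp (act.TM_mp _ (Units.ne_zero w)).measurable)
      (fun x => abs_gB_le_one _)
  have hcs := cs_integral hg2 hgT
  have hT : ∫ x, (gB act B (act.TM (↑w) x)) ^ 2 ∂μ = ∫ x, gB act B x ^ 2 ∂μ :=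
    int_comp (act.TM_mp _ (Units.ne_zero w))
      (h := fun x => gB act B x ^ 2) ((meas_gB hB).pow_const 2).aestronglyMeasurable
  rw [hT] at hcs
  have hX := int_gB_sq_nonneg (act := act) (B := B) (μ := μ)
  nlinarith [abs_nonneg (∫ x, gB act B x * gB act B (act.TM (↑w) x) ∂μ),
    sq_abs (∫ x, gB act B x * gB act B (act.TM (↑w) x) ∂μ)]

-- ## `T2` rewriting

lemma T2_flip (hB : MeasurableSet B) (u : Fˣ) :
    ∫ x, fB B (act.TM (↑u) x) * hU act B u x ∂μ
      = ∫ x, fB B x * hU act B u (act.TM (↑(u⁻¹)) x) ∂μ := by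
  have h3 := int_comp (act.TM_mp (↑(u⁻¹)) (Units.ne_zero u⁻¹))
    (h := fun x => fB B (act.TM (↑u) x) * hU act B u x)
    ((((meas_fB hB).comp (act.TM_mp _ (Units.ne_zero u)).measurable).mul
      (meas_hU hB u)).aestronglyMeasurable)
  rw [← h3]
  refine integral_congr_ae (Filter.Eventually.of_forall fun x => ?_)
  simp only [TMinv_pt]

lemma T2_eq (hB : MeasurableSet B) :
    ∑ u : Fˣ, ∫ x, fB B (act.TM (↑u) x) * hU act B u x ∂μ
      = ∫ x, fB B x * GG act B x ∂μ := by
  rw [Finset.sum_congr rfl (fun (u : Fˣ) _ => T2_flip hB u),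
    ← integral_finset_sum (μ := μ) Finset.univ
    (f := fun (u : Fˣ) (x : Ω) => fB B x * hU act B u (act.TM (↑(u⁻¹)) x))
    (fun (u : Fˣ) _ => integrable_mul_of_bdd (meas_fB hB)
      ((meas_hU hB u).comp (act.TM_mp _ (Units.ne_zero u⁻¹)).measurable)
      abs_fB_le_one (fun x => abs_hU_le_one u _))]
  refine integral_congr_ae (Filter.Eventually.of_forall fun x => ?_)
  simp only [GG, Finset.mul_sum]

-- ## expanding `∫ GG²`

lemma GG_sq_expand (hB : MeasurableSet B) :
    ∫ x, GG act B x ^ 2 ∂μ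
      = ∑ u : Fˣ, ∑ v : Fˣ, ∫ x,
          hU act B u (act.TM (↑(u⁻¹)) x) * hU act B v (act.TM (↑(v⁻¹)) x) ∂μ := by
  have hmeas : ∀ u : Fˣ, Measurable (fun x => hU act B u (act.TM (↑(u⁻¹)) x)) :=
    fun u => (meas_hU hB u).comp (act.TM_mp _ (Units.ne_zero u⁻¹)).measurable
  have expand : ∀ x : Ω, GG act B x ^ 2 = ∑ u : Fˣ,
      (hU act B u (act.TM (↑(u⁻¹)) x) * GG act B x) := by
    intro x
    rw [sq, GG, Finset.sum_mul]
  rw [show (fun x => GG act B x ^ 2) = fun x => ∑ u : Fˣ,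
      (hU act B u (act.TM (↑(u⁻¹)) x) * GG act B x) by funext x; exact expand x]
  rw [integral_finset_sum (μ := μ) Finset.univ
    (f := fun (u : Fˣ) (x : Ω) => hU act B u (act.TM (↑(u⁻¹)) x) * GG act B x)
    (fun (u : Fˣ) _ => integrable_mul_of_bdd (hmeas u) (meas_GG hB)
      (fun x => abs_hU_le_one u _) abs_GG_le)]
  refine Finset.sum_congr rfl (fun (u : Fˣ) _ => ?_)
  rw [show (fun x => hU act B u (act.TM (↑(u⁻¹)) x) * GG act B x) = fun x => ∑ v : Fˣ,
      (hU act B u (act.TM (↑(u⁻¹)) x) * hU act B v (act.TM (↑(v⁻¹)) x)) by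
    funext x; rw [GG, Finset.mul_sum]]
  rw [integral_finset_sum (μ := μ) Finset.univ
    (f := fun (v : Fˣ) (x : Ω) => hU act B u (act.TM (↑(u⁻¹)) x)
      * hU act B v (act.TM (↑(v⁻¹)) x))
    (fun (v : Fˣ) _ => integrable_mul_of_bdd (hmeas u) (hmeas v)
      (fun x => abs_hU_le_one u _) (fun x => abs_hU_le_one v _))]

lemma pair_step (hB : MeasurableSet B) (u v : Fˣ) :
    ∫ x, hU act B u (act.TM (↑(u⁻¹)) x) * hU act B v (act.TM (↑(v⁻¹)) x) ∂μ
      = ∫ x, hU act B u x * hU act B v (act.TM (↑(v⁻¹ * u)) x) ∂μ := by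
  have h3 := int_comp (act.TM_mp (↑u) (Units.ne_zero u))
    (h := fun x => hU act B u (act.TM (↑(u⁻¹)) x) * hU act B v (act.TM (↑(v⁻¹)) x))
    ((((meas_hU hB u).comp (act.TM_mp _ (Units.ne_zero u⁻¹)).measurable).mul
      ((meas_hU hB v).comp (act.TM_mp _ (Units.ne_zero v⁻¹)).measurable)).aestronglyMeasurable)
  rw [← h3]
  refine integral_congr_ae (Filter.Eventually.of_forall fun x => ?_)
  have e1 : act.TM (↑(u⁻¹)) (act.TM (↑u) x) = x := TMinv_pt' u x
  have e2 : act.TM (↑(v⁻¹)) (act.TM (↑u) x) = act.TM (↑(v⁻¹ * u)) x := by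
    rw [TM_pt, Units.val_mul]
  simp only [e1, e2]

lemma pair_step2 (hB : MeasurableSet B) (w v : Fˣ) :
    ∫ x, hU act B (w * v) x * hU act B v (act.TM (↑w) x) ∂μ
      = ∫ x, gB act B x *
          (fB B (act.TA ((↑v : F) * (1 - (↑w : F) ^ 2)) (act.TM (↑w) x))
            - pB act B (act.TM (↑w) x)) ∂μ := by
  have h3 := int_comp (act.TA_mp (-((↑w : F) * ↑v)))
    (h := fun x => hU act B (w * v) x * hU act B v (act.TM (↑w) x))
    (((meas_hU hB (w * v)).mul
      ((meas_hU hB v).comp (act.TM_mp _ (Units.ne_zero w)).measurable)).aestronglyMeasurable)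
  rw [← h3]
  refine integral_congr_ae (Filter.Eventually.of_forall fun x => ?_)
  have e1 : hU act B (w * v) (act.TA (-((↑w : F) * ↑v)) x) = gB act B x := by
    unfold hU gB
    rw [TA_pt, pB_TA, Units.val_mul]
    norm_num [TA_zero_pt]
  have e2 : hU act B v (act.TM (↑w) (act.TA (-((↑w : F) * ↑v)) x))
      = fB B (act.TA ((↑v : F) * (1 - (↑w : F) ^ 2)) (act.TM (↑w) x))
        - pB act B (act.TM (↑w) x) := by
    unfold hU
    rw [comm_pt, TA_pt, pB_TA]
    congr 2
    ring
  simp only [e1, e2]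


-- ## the inner sums

lemma sum_dd (hB : MeasurableSet B) (hq : 2 ≤ Fintype.card F) {e : F} (he : e ≠ 0) (y : Ω) :
    ∑ v : Fˣ, (fB B (act.TA ((↑v : F) * e) y) - pB act B y) = -(gB act B y) := by
  rw [Finset.sum_sub_distrib]
  have h1 : ∑ v : Fˣ, fB B (act.TA ((↑v : F) * e) y)
      = (Fintype.card F : ℝ) * pB act B y - fB B y := by
    set eu := Units.mk0 e he with heu
    have hcoe : ∀ v : Fˣ, ((↑v : F) * e) = ↑(v * eu) := fun v => by
      simp [heu, Units.val_mul]
    rw [Finset.sum_congr rfl fun (v : Fˣ) _ => by rw [hcoe v]]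
    have h2 : ∑ v : Fˣ, fB B (act.TA (↑(v * eu)) y) = ∑ v : Fˣ, fB B (act.TA (↑v) y) :=
      Fintype.sum_equiv (Equiv.mulRight eu) (fun v => fB B (act.TA (↑(v * eu)) y))
        (fun v => fB B (act.TA (↑v) y)) (fun v => by simp)
    rw [h2, sum_units_val (fun a => fB B (act.TA a y)), sum_fB_TA, TA_zero_pt]
  rw [h1, Finset.sum_const, Finset.card_univ, nsmul_eq_mul, card_units_real hq]
  unfold gB; ring

lemma inner_sum_bound (hB : MeasurableSet B) (hq : 2 ≤ Fintype.card F) (w : Fˣ) :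
    ∑ v : Fˣ, ∫ x, gB act B x *
        (fB B (act.TA ((↑v : F) * (1 - (↑w : F) ^ 2)) (act.TM (↑w) x))
          - pB act B (act.TM (↑w) x)) ∂μ
      ≤ (if ((↑w : F) ^ 2 = 1) then (Fintype.card Fˣ : ℝ) else 1)
          * ∫ x, gB act B x ^ 2 ∂μ := by
  set X := ∫ x, gB act B x ^ 2 ∂μ with hX
  by_cases hsq : ((↑w : F) ^ 2 = 1)
  · rw [if_pos hsq]
    have hterm : ∀ v : Fˣ, ∫ x, gB act B x *
        (fB B (act.TA ((↑v : F) * (1 - (↑w : F) ^ 2)) (act.TM (↑w) x))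
          - pB act B (act.TM (↑w) x)) ∂μ
        = ∫ x, gB act B x * gB act B (act.TM (↑w) x) ∂μ := by
      intro v
      refine integral_congr_ae (Filter.Eventually.of_forall fun x => ?_)
      simp [hsq, TA_zero_pt, gB]
    calc ∑ v : Fˣ, ∫ x, gB act B x *
          (fB B (act.TA ((↑v : F) * (1 - (↑w : F) ^ 2)) (act.TM (↑w) x))
            - pB act B (act.TM (↑w) x)) ∂μ
        = ∑ _v : Fˣ, ∫ x, gB act B x * gB act B (act.TM (↑w) x) ∂μ :=
          Finset.sum_congr rfl fun v _ => hterm v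
      _ ≤ ∑ _v : Fˣ, X :=
          Finset.sum_le_sum fun v _ => (le_abs_self _).trans (gcorr hB w)
      _ = (Fintype.card Fˣ : ℝ) * X := by
          rw [Finset.sum_const, Finset.card_univ, nsmul_eq_mul]
  · rw [if_neg hsq]
    have he : (1 - (↑w : F) ^ 2) ≠ 0 := sub_ne_zero.mpr (Ne.symm hsq)
    have hint : ∀ v : Fˣ, Integrable (fun x => gB act B x *
        (fB B (act.TA ((↑v : F) * (1 - (↑w : F) ^ 2)) (act.TM (↑w) x))
          - pB act B (act.TM (↑w) x))) μ := by
      intro v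
      refine integrable_mul_of_bdd (meas_gB hB) (Measurable.sub
        (((meas_fB hB).comp (act.TA_mp _).measurable).comp
          (act.TM_mp _ (Units.ne_zero w)).measurable)
        ((meas_pB hB).comp (act.TM_mp _ (Units.ne_zero w)).measurable))
        abs_gB_le_one (C := 1) (D := 2) (fun x => ?_)
      have h1 := abs_fB_le_one (B := B)
        (act.TA ((↑v : F) * (1 - (↑w : F) ^ 2)) (act.TM (↑w) x))
      have h2 := abs_pB_le_one (act := act) (B := B) (act.TM (↑w) x)
      rw [abs_le] at h1 h2 ⊢
      constructor <;> [linarith [h1.1, h2.2]; linarith [h1.2, h2.1]]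
    have hswap : ∑ v : Fˣ, ∫ x, gB act B x *
        (fB B (act.TA ((↑v : F) * (1 - (↑w : F) ^ 2)) (act.TM (↑w) x))
          - pB act B (act.TM (↑w) x)) ∂μ
        = ∫ x, gB act B x * -(gB act B (act.TM (↑w) x)) ∂μ := by
      rw [← integral_finset_sum (μ := μ) Finset.univ
        (f := fun (v : Fˣ) (x : Ω) => gB act B x *
          (fB B (act.TA ((↑v : F) * (1 - (↑w : F) ^ 2)) (act.TM (↑w) x))
            - pB act B (act.TM (↑w) x))) (fun (v : Fˣ) _ => hint v)]
      refine integral_congr_ae (Filter.Eventually.of_forall fun x => ?_)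
      show ∑ v : Fˣ, gB act B x *
          (fB B (act.TA ((↑v : F) * (1 - (↑w : F) ^ 2)) (act.TM (↑w) x))
            - pB act B (act.TM (↑w) x))
        = gB act B x * -(gB act B (act.TM (↑w) x))
      rw [← Finset.mul_sum, sum_dd hB hq he (act.TM (↑w) x)]
    rw [hswap, one_mul]
    have h4 : ∫ x, gB act B x * -(gB act B (act.TM (↑w) x)) ∂μ
        = -∫ x, gB act B x * gB act B (act.TM (↑w) x) ∂μ := by
      rw [← integral_neg]
      exact integral_congr_ae (Filter.Eventually.of_forall fun x => by ring_nf)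
    rw [h4]
    have := gcorr (act := act) hB w
    have habs := neg_abs_le (∫ x, gB act B x * gB act B (act.TM (↑w) x) ∂μ)
    linarith

lemma card_sq_one_le : ((Finset.univ.filter (fun w : Fˣ => (↑w : F) ^ 2 = 1)).card : ℝ) ≤ 2 := by
  have hsub : Finset.univ.filter (fun w : Fˣ => (↑w : F) ^ 2 = 1) ⊆ ({1, -1} : Finset Fˣ) := by
    intro w hw
    rw [Finset.mem_filter] at hw
    have h1 : (↑w : F) * ↑w = 1 := by rw [← sq]; exact hw.2
    rcases mul_self_eq_one_iff.mp h1 with h | h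
    · simp only [Finset.mem_insert, Finset.mem_singleton]
      left; exact Units.ext h
    · simp only [Finset.mem_insert, Finset.mem_singleton]
      right; exact Units.ext (by rw [Units.val_neg, Units.val_one, h])
  have h2 : (Finset.univ.filter (fun w : Fˣ => (↑w : F) ^ 2 = 1)).card
      ≤ ({1, -1} : Finset Fˣ).card := Finset.card_le_card hsub
  have h3 : ({1, -1} : Finset Fˣ).card ≤ 2 :=
    (Finset.card_insert_le _ _).trans (by simp)
  exact_mod_cast h2.trans h3


-- ## total bound on `∫ GG²`

lemma GG_sq_le (hB : MeasurableSet B) (hq : 2 ≤ Fintype.card F) :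
    ∫ x, GG act B x ^ 2 ∂μ
      ≤ 3 * ((Fintype.card F : ℝ) - 1) * ∫ x, gB act B x ^ 2 ∂μ := by
  set X := ∫ x, gB act B x ^ 2 ∂μ with hX
  have hX0 : 0 ≤ X := int_gB_sq_nonneg
  have hcard : (Fintype.card Fˣ : ℝ) = (Fintype.card F : ℝ) - 1 := card_units_real hq
  have hq1 : (0 : ℝ) ≤ (Fintype.card F : ℝ) - 1 := by
    have : (2 : ℝ) ≤ (Fintype.card F : ℝ) := by exact_mod_cast hq
    linarith
  calc ∫ x, GG act B x ^ 2 ∂μ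
      = ∑ u : Fˣ, ∑ v : Fˣ, ∫ x,
          hU act B u (act.TM (↑(u⁻¹)) x) * hU act B v (act.TM (↑(v⁻¹)) x) ∂μ :=
        GG_sq_expand hB
    _ = ∑ v : Fˣ, ∑ u : Fˣ, ∫ x,
          hU act B u (act.TM (↑(u⁻¹)) x) * hU act B v (act.TM (↑(v⁻¹)) x) ∂μ :=
        Finset.sum_comm
    _ = ∑ v : Fˣ, ∑ w : Fˣ, ∫ x, hU act B (w * v) x * hU act B v (act.TM (↑w) x) ∂μ := by
        refine Finset.sum_congr rfl fun (v : Fˣ) _ => ?_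
        rw [Finset.sum_congr rfl fun (u : Fˣ) _ => pair_step hB u v]
        refine (Fintype.sum_equiv (Equiv.mulRight v)
          (fun w => ∫ x, hU act B (w * v) x * hU act B v (act.TM (↑w) x) ∂μ)
          (fun u => ∫ x, hU act B u x * hU act B v (act.TM (↑(v⁻¹ * u)) x) ∂μ)
          (fun w => ?_)).symm
        have hvw : v⁻¹ * (w * v) = w := by
          rw [mul_comm w v, ← mul_assoc, inv_mul_cancel, one_mul]
        show (∫ x, hU act B (w * v) x * hU act B v (act.TM (↑w) x) ∂μ)
          = ∫ x, hU act B ((Equiv.mulRight v) w) x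
              * hU act B v (act.TM (↑(v⁻¹ * ((Equiv.mulRight v) w))) x) ∂μ
        rw [show ((Equiv.mulRight v) w) = w * v from rfl, hvw]
    _ = ∑ v : Fˣ, ∑ w : Fˣ, ∫ x, gB act B x *
          (fB B (act.TA ((↑v : F) * (1 - (↑w : F) ^ 2)) (act.TM (↑w) x))
            - pB act B (act.TM (↑w) x)) ∂μ :=
        Finset.sum_congr rfl fun v _ => Finset.sum_congr rfl fun w _ => pair_step2 hB w v
    _ = ∑ w : Fˣ, ∑ v : Fˣ, ∫ x, gB act B x *
          (fB B (act.TA ((↑v : F) * (1 - (↑w : F) ^ 2)) (act.TM (↑w) x))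
            - pB act B (act.TM (↑w) x)) ∂μ :=
        Finset.sum_comm
    _ ≤ ∑ w : Fˣ, (if ((↑w : F) ^ 2 = 1) then (Fintype.card Fˣ : ℝ) else 1) * X :=
        Finset.sum_le_sum fun w _ => inner_sum_bound hB hq w
    _ ≤ 3 * ((Fintype.card F : ℝ) - 1) * X := by
        rw [Finset.sum_congr rfl (fun (w : Fˣ) _ => ite_mul
          ((↑w : F) ^ 2 = 1) (Fintype.card Fˣ : ℝ) 1 X), Finset.sum_ite]
        have hc1 : ((Finset.univ.filter (fun w : Fˣ => (↑w : F) ^ 2 = 1)).card : ℝ) ≤ 2 :=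
          card_sq_one_le
        have hc2 : ((Finset.univ.filter (fun w : Fˣ => ¬((↑w : F) ^ 2 = 1))).card : ℝ)
            ≤ (Fintype.card F : ℝ) - 1 := by
          rw [← hcard]
          exact_mod_cast Finset.card_le_card (Finset.filter_subset _ _) |>.trans
            (le_of_eq Finset.card_univ)
        rw [Finset.sum_const, Finset.sum_const, nsmul_eq_mul, nsmul_eq_mul, hcard]
        have hXmul : 0 ≤ ((Fintype.card F : ℝ) - 1) * X := mul_nonneg hq1 hX0
        nlinarith [mul_le_mul_of_nonneg_right hc1 hXmul,
          mul_le_mul_of_nonneg_right hc2 hX0,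
          Nat.cast_nonneg (α := ℝ) (Finset.univ.filter (fun w : Fˣ => (↑w : F) ^ 2 = 1)).card]


-- ## positivity of `S`

lemma S_pos (hB : MeasurableSet B)
    (hμB : Real.sqrt (6 / Fintype.card F) < (μ B).toReal) :
    0 < ∑ u : Fˣ, ∫ x, fB B (act.TM (↑u) x) * fB B (act.TA (↑u) x) ∂μ := by
  have hq : 2 ≤ Fintype.card F := Fintype.one_lt_card
  set q : ℝ := (Fintype.card F : ℝ) with hqdef
  set δ : ℝ := (μ B).toReal with hδdef
  set X : ℝ := ∫ x, gB act B x ^ 2 ∂μ with hXdef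
  have hqR : (2 : ℝ) ≤ q := by rw [hqdef]; exact_mod_cast hq
  have hq0 : (0 : ℝ) < q := by linarith
  have hq1 : (0 : ℝ) < q - 1 := by linarith
  have hX0 : 0 ≤ X := int_gB_sq_nonneg
  have hXδ : X ≤ δ := int_gB_sq_le hB
  -- split S = T1 + T2
  have split : ∀ u : Fˣ,
      ∫ x, fB B (act.TM (↑u) x) * fB B (act.TA (↑u) x) ∂μ
        = (∫ x, fB B (act.TM (↑u) x) * pB act B x ∂μ)
          + ∫ x, fB B (act.TM (↑u) x) * hU act B u x ∂μ := by
    intro u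
    rw [← integral_add (f := fun x => fB B (act.TM (↑u) x) * pB act B x)
      (g := fun x => fB B (act.TM (↑u) x) * hU act B u x)
      (integrable_mul_of_bdd ((meas_fB hB).comp (act.TM_mp _ (Units.ne_zero u)).measurable)
        (meas_pB hB) abs_fB_le_one (fun x => abs_pB_le_one _))
      (integrable_mul_of_bdd ((meas_fB hB).comp (act.TM_mp _ (Units.ne_zero u)).measurable)
        (meas_hU hB u) abs_fB_le_one (fun x => abs_hU_le_one u _))]
    refine integral_congr_ae (Filter.Eventually.of_forall fun x => ?_)
    show fB B (act.TM (↑u) x) * fB B (act.TA (↑u) x)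
      = fB B (act.TM (↑u) x) * pB act B x + fB B (act.TM (↑u) x) * hU act B u x
    unfold hU
    ring
  rw [Finset.sum_congr rfl (fun (u : Fˣ) _ => split u), Finset.sum_add_distrib]
  -- T1 bound
  have hT1 : ∑ u : Fˣ, ∫ x, fB B (act.TM (↑u) x) * pB act B x ∂μ
      = (q - 1) * ∫ x, fB B x * rB act B x ∂μ := T1_eq hB hq
  have hfr : ∫ x, fB B x * rB act B x ∂μ = ∫ x, rB act B x * rB act B x ∂μ := by
    rw [int_mul_left_eq hB (meas_rB hB) (abs_rB_le_one hq) rB_TA]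
    exact int_pr_eq_rr hB hq
  have hrr : δ ^ 2 ≤ ∫ x, rB act B x * rB act B x ∂μ := by
    have hcs := cs_integral (μ := μ) (a := rB act B) (b := fun _ => (1 : ℝ))
      (memL2_of_bdd (meas_rB hB) (abs_rB_le_one hq)) (memLp_const 1)
    have h1 : ∫ x, rB act B x * (1 : ℝ) ∂μ = δ := by
      simpa using int_rB hB hq
    have h2 : ∫ _x : Ω, (1 : ℝ) ^ 2 ∂μ = 1 := by simp
    have h3 : ∫ x, rB act B x ^ 2 ∂μ = ∫ x, rB act B x * rB act B x ∂μ := by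
      refine integral_congr_ae (Filter.Eventually.of_forall fun x => ?_)
      simp [sq]
    rw [h1, h2, h3, mul_one] at hcs
    exact hcs
  have hT1ge : (q - 1) * δ ^ 2 ≤ ∑ u : Fˣ, ∫ x, fB B (act.TM (↑u) x) * pB act B x ∂μ := by
    rw [hT1, hfr]
    exact mul_le_mul_of_nonneg_left hrr (le_of_lt hq1)
  -- T2 bound
  have hT2eq : ∑ u : Fˣ, ∫ x, fB B (act.TM (↑u) x) * hU act B u x ∂μ
      = ∫ x, fB B x * GG act B x ∂μ := T2_eq hB
  set T2 : ℝ := ∫ x, fB B x * GG act B x ∂μ with hT2def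
  have hT2sq : T2 ^ 2 ≤ δ * (3 * (q - 1) * X) := by
    have hcs := cs_integral (μ := μ) (a := fB B) (b := GG act B)
      (memL2_of_bdd (meas_fB hB) abs_fB_le_one)
      (memL2_of_bdd (meas_GG hB) abs_GG_le)
    have h1 : ∫ x, fB B x ^ 2 ∂μ = δ := by
      rw [show (fun x => fB B x ^ 2) = fB B by funext x; rw [sq]; exact fB_sq x]
      exact int_fB hB
    rw [h1] at hcs
    exact hcs.trans (mul_le_mul_of_nonneg_left (GG_sq_le hB hq)
      (ENNReal.toReal_nonneg))
  -- numerics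
  have hδ0 : 0 < δ := lt_of_le_of_lt (Real.sqrt_nonneg _) hμB
  have h6q : 0 ≤ 6 / q := by positivity
  have hδsq : 6 / q < δ ^ 2 := by
    have := Real.sq_sqrt h6q
    nlinarith [Real.sqrt_nonneg (6 / q), hμB]
  have hkey : 3 < (q - 1) * δ ^ 2 := by
    have h1 : 6 / q ≤ 3 := by
      rw [div_le_iff₀ hq0]; linarith
    have h2 : (q - 1) * (6 / q) = 6 - 6 / q := by
      field_simp
    nlinarith
  have hT2sq' : T2 ^ 2 < ((q - 1) * δ ^ 2) ^ 2 := by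
    have hδ2 : X * δ ≤ δ * δ := by nlinarith
    nlinarith [mul_pos hq1 (mul_pos hδ0 hδ0)]
  have hT2gt : -((q - 1) * δ ^ 2) < T2 := by
    nlinarith [sq_nonneg (T2 + (q - 1) * δ ^ 2)]
  rw [hT2eq]
  calc (0 : ℝ) < (q - 1) * δ ^ 2 + T2 := by linarith
    _ ≤ (∑ u : Fˣ, ∫ x, fB B (act.TM (↑u) x) * pB act B x ∂μ) + T2 := by linarith

end FFRec

/-- Finite field recurrence: if the affine group of a finite field `F` acts by measure
preserving transformations on a probability space and `μ(B) > √(6/|F|)`, then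
`μ(B ∩ M_u A_{-u} B) > 0` for some `u ∈ F*`. -/
theorem finite_field_recurrence {F : Type*} [Field F] [Fintype F]
    {Ω : Type*} [MeasurableSpace Ω] {μ : Measure Ω} [IsProbabilityMeasure μ]
    (act : AffineAction F μ)
    (B : Set Ω) (hB : MeasurableSet B)
    (hμB : Real.sqrt (6 / Fintype.card F) < (μ B).toReal) :
    ∃ u : F, u ≠ 0 ∧ 0 < μ (B ∩ (act.TM u ∘ act.TA (-u)) '' B) := by
  letI : DecidableEq F := Classical.decEq F
  have hpos := FFRec.S_pos (act := act) (B := B) hB hμB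
  have hzero : (0 : ℝ) = ∑ _u : Fˣ, (0 : ℝ) := by simp
  rw [hzero] at hpos
  obtain ⟨u, _, hu⟩ := Finset.exists_lt_of_sum_lt hpos
  refine ⟨(↑u : F), Units.ne_zero u, ?_⟩
  rw [FFRec.claimA (act := act) hB u] at hu
  exact (ENNReal.toReal_pos_iff.mp hu).1
end

section
/- Let F be a finite field with an ergodic measure preserving action of the affine group A_F on a probability space (Ω,B,μ). If B, C ∈ B satisfy μ(B)μ(C) > 6/|F*|, then there exists u ∈ F* with μ(B ∩ M_u A_{-u} C) > 0. Moreover, the averaged bound (1/|F*|) Σ_{u∈F*} μ(B ∩ M_u A_{-u} C) ≥ μ(B)μ(C) - √(6μ(B)μ(C)/|F*|) holds. -/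
open MeasureTheory
open scoped ENNReal

namespace FFER

open Set Finset

variable {F : Type*} [Field F] {Ω : Type*} [MeasurableSpace Ω] {μ : Measure Ω}
  (act : AffineAction F μ)

lemma TA_TA (u v : F) (x : Ω) : act.TA u (act.TA v x) = act.TA (u + v) x := by
  rw [act.TA_add]; rfl

lemma TA_neg_TA (u : F) (x : Ω) : act.TA (-u) (act.TA u x) = x := by
  rw [TA_TA]; simp [act.TA_zero]

lemma TM_TM (u v : F) (hu : u ≠ 0) (hv : v ≠ 0) (x : Ω) :
    act.TM u (act.TM v x) = act.TM (u * v) x := by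
  rw [act.TM_mul u v hu hv]; rfl

lemma TM_inv_TM (u : F) (hu : u ≠ 0) (x : Ω) : act.TM u⁻¹ (act.TM u x) = x := by
  rw [TM_TM act u⁻¹ u (inv_ne_zero hu) hu, inv_mul_cancel₀ hu, act.TM_one]; rfl

lemma TM_TA (u v : F) (hu : u ≠ 0) (x : Ω) :
    act.TM u (act.TA v x) = act.TA (u * v) (act.TM u x) := by
  have h := congrFun (act.comm u v hu) x
  simpa using h

/-- element `x ↦ TA w (TM r x)` of the affine group -/
def gm (w r : F) : Ω → Ω := act.TA w ∘ act.TM r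

/-- its inverse -/
def gi (w r : F) : Ω → Ω := act.TM r⁻¹ ∘ act.TA (-w)

/-- the map `M_u A_{-u}` -/
def tm (u : F) : Ω → Ω := act.TM u ∘ act.TA (-u)

/-- its inverse -/
def ti (u : F) : Ω → Ω := act.TA u ∘ act.TM u⁻¹

lemma gi_gm (w r : F) (hr : r ≠ 0) (x : Ω) : gi act w r (gm act w r x) = x := by
  simp only [gi, gm, Function.comp_apply]
  rw [TA_neg_TA, TM_inv_TM act r hr]

lemma gm_gi (w r : F) (hr : r ≠ 0) (x : Ω) : gm act w r (gi act w r x) = x := by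
  simp only [gi, gm, Function.comp_apply]
  have : act.TM r (act.TM r⁻¹ (act.TA (-w) x)) = act.TA (-w) x := by
    have := TM_inv_TM act r⁻¹ (inv_ne_zero hr) (act.TA (-w) x)
    rwa [inv_inv] at this
  rw [this, TA_TA]
  simp [act.TA_zero]

lemma ti_tm (u : F) (hu : u ≠ 0) (x : Ω) : ti act u (tm act u x) = x := by
  simp only [ti, tm, Function.comp_apply]
  rw [TM_inv_TM act u hu, TA_TA]
  simp [act.TA_zero]

lemma tm_ti (u : F) (hu : u ≠ 0) (x : Ω) : tm act u (ti act u x) = x := by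
  simp only [ti, tm, Function.comp_apply]
  rw [TA_neg_TA]
  have := TM_inv_TM act u⁻¹ (inv_ne_zero hu) x
  rwa [inv_inv] at this

lemma gm_mp (w r : F) (hr : r ≠ 0) : MeasurePreserving (gm act w r) μ μ :=
  (act.TA_mp w).comp (act.TM_mp r hr)

lemma gi_mp (w r : F) (hr : r ≠ 0) : MeasurePreserving (gi act w r) μ μ :=
  (act.TM_mp r⁻¹ (inv_ne_zero hr)).comp (act.TA_mp (-w))

lemma tm_mp (u : F) (hu : u ≠ 0) : MeasurePreserving (tm act u) μ μ :=
  (act.TM_mp u hu).comp (act.TA_mp (-u))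

lemma ti_mp (u : F) (hu : u ≠ 0) : MeasurePreserving (ti act u) μ μ :=
  (act.TA_mp u).comp (act.TM_mp u⁻¹ (inv_ne_zero hu))

lemma gm_image (w r : F) (hr : r ≠ 0) (s : Set Ω) :
    gm act w r '' s = gi act w r ⁻¹' s :=
  congrFun (Set.image_eq_preimage_of_inverse (gi_gm act w r hr) (gm_gi act w r hr)) s

lemma tm_image (u : F) (hu : u ≠ 0) (s : Set Ω) :
    tm act u '' s = ti act u ⁻¹' s :=
  congrFun (Set.image_eq_preimage_of_inverse (ti_tm act u hu) (tm_ti act u hu)) s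

lemma gm_image_measurableSet (w r : F) (hr : r ≠ 0) {s : Set Ω} (hs : MeasurableSet s) :
    MeasurableSet (gm act w r '' s) := by
  rw [gm_image act w r hr]
  exact (gi_mp act w r hr).measurable hs

lemma tm_image_measurableSet (u : F) (hu : u ≠ 0) {s : Set Ω} (hs : MeasurableSet s) :
    MeasurableSet (tm act u '' s) := by
  rw [tm_image act u hu]
  exact (ti_mp act u hu).measurable hs

lemma measure_gm_image (w r : F) (hr : r ≠ 0) {s : Set Ω} (hs : MeasurableSet s) :
    μ (gm act w r '' s) = μ s := by
  rw [gm_image act w r hr]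
  exact (gi_mp act w r hr).measure_preimage hs.nullMeasurableSet

lemma measure_tm_image (u : F) (hu : u ≠ 0) {s : Set Ω} (hs : MeasurableSet s) :
    μ (tm act u '' s) = μ s := by
  rw [tm_image act u hu]
  exact (ti_mp act u hu).measure_preimage hs.nullMeasurableSet

lemma ti_tm_eq (u v : F) (hu : u ≠ 0) (hv : v ≠ 0) (x : Ω) :
    ti act u (tm act v x) = gm act (u - u⁻¹ * v * v) (u⁻¹ * v) x := by
  simp only [ti, tm, gm, Function.comp_apply]
  rw [TM_TM act u⁻¹ v (inv_ne_zero hu) hv,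
    TM_TA act (u⁻¹ * v) (-v) (mul_ne_zero (inv_ne_zero hu) hv), TA_TA]
  congr 1
  ring


lemma measure_tm_inter (u v : F) (hu : u ≠ 0) (hv : v ≠ 0) {C : Set Ω}
    (hC : MeasurableSet C) :
    μ (tm act u '' C ∩ tm act v '' C)
      = μ (C ∩ gm act (u - u⁻¹ * v * v) (u⁻¹ * v) '' C) := by
  have hr : u⁻¹ * v ≠ 0 := mul_ne_zero (inv_ne_zero hu) hv
  have hinj : Function.Injective (tm act u) :=
    Function.LeftInverse.injective (ti_tm act u hu)
  have him : tm act u '' (C ∩ gm act (u - u⁻¹ * v * v) (u⁻¹ * v) '' C)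
      = tm act u '' C ∩ tm act v '' C := by
    rw [Set.image_inter hinj]
    congr 1
    rw [← Set.image_comp]
    apply Set.image_congr'
    intro x
    simp only [Function.comp_apply]
    rw [← ti_tm_eq act u v hu hv x, tm_ti act u hu]
  rw [← him,
    measure_tm_image act u hu (hC.inter (gm_image_measurableSet act _ _ hr hC))]

lemma ind_preimage (f : Ω → Ω) (s : Set Ω) (x : Ω) :
    (f ⁻¹' s).indicator (1 : Ω → ℝ) x = s.indicator (1 : Ω → ℝ) (f x) := by
  by_cases h : f x ∈ s <;> simp [Set.indicator_apply, h]

lemma ind_gm_TA (w r t : F) (hr : r ≠ 0) (C : Set Ω) (x : Ω) :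
    (gm act w r '' C).indicator (1 : Ω → ℝ) (act.TA t x)
      = (gm act (w - t) r '' C).indicator (1 : Ω → ℝ) x := by
  rw [gm_image act w r hr, gm_image act (w - t) r hr, ind_preimage, ind_preimage]
  congr 1
  simp only [gi, Function.comp_apply]
  rw [TA_TA]
  have : -w + t = -(w - t) := by ring
  rw [this]

lemma ind_gm_TM (w r s : F) (hr : r ≠ 0) (hs : s ≠ 0) (C : Set Ω) (x : Ω) :
    (gm act w r '' C).indicator (1 : Ω → ℝ) (act.TM s x)
      = (gm act (w * s⁻¹) (s⁻¹ * r) '' C).indicator (1 : Ω → ℝ) x := by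
  have hr' : s⁻¹ * r ≠ 0 := mul_ne_zero (inv_ne_zero hs) hr
  rw [gm_image act w r hr, gm_image act _ _ hr', ind_preimage, ind_preimage]
  congr 1
  simp only [gi, Function.comp_apply]
  have h1 : act.TA (-w) (act.TM s x) = act.TM s (act.TA (-(w * s⁻¹)) x) := by
    rw [TM_TA act s (-(w * s⁻¹)) hs]
    have : s * -(w * s⁻¹) = -w := by field_simp
    rw [this]
  rw [h1, TM_TM act r⁻¹ s (inv_ne_zero hr) hs]
  have : (s⁻¹ * r)⁻¹ = r⁻¹ * s := by
    rw [mul_inv_rev, inv_inv]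
  rw [this]

section Fin

variable [Fintype F] [DecidableEq F]

/-- average over the affine group of the translates of the indicator of `C` -/
noncomputable def Hf (C : Set Ω) : Ω → ℝ := fun x =>
  ∑ r ∈ Finset.univ.erase (0 : F), ∑ w : F,
    (gm act w r '' C).indicator (1 : Ω → ℝ) x

lemma Hf_TA (C : Set Ω) (t : F) (x : Ω) : Hf act C (act.TA t x) = Hf act C x := by
  unfold Hf
  refine Finset.sum_congr rfl fun r hr => ?_
  have hr0 : r ≠ 0 := Finset.ne_of_mem_erase hr
  calc ∑ w : F, (gm act w r '' C).indicator (1 : Ω → ℝ) (act.TA t x)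
      = ∑ w : F, (gm act (w - t) r '' C).indicator (1 : Ω → ℝ) x :=
        Finset.sum_congr rfl fun w _ => ind_gm_TA act w r t hr0 C x
    _ = ∑ w : F, (gm act w r '' C).indicator (1 : Ω → ℝ) x :=
        Finset.sum_equiv (Equiv.subRight t) (by simp) (fun w _ => rfl)

lemma Hf_TM (C : Set Ω) (s : F) (hs : s ≠ 0) (x : Ω) :
    Hf act C (act.TM s x) = Hf act C x := by
  unfold Hf
  calc ∑ r ∈ Finset.univ.erase (0 : F), ∑ w : F,
        (gm act w r '' C).indicator (1 : Ω → ℝ) (act.TM s x)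
      = ∑ r ∈ Finset.univ.erase (0 : F), ∑ w : F,
          (gm act (w * s⁻¹) (s⁻¹ * r) '' C).indicator (1 : Ω → ℝ) x := by
        refine Finset.sum_congr rfl fun r hr => Finset.sum_congr rfl fun w _ => ?_
        exact ind_gm_TM act w r s (Finset.ne_of_mem_erase hr) hs C x
    _ = ∑ r ∈ Finset.univ.erase (0 : F), ∑ w : F,
          (gm act w (s⁻¹ * r) '' C).indicator (1 : Ω → ℝ) x := by
        refine Finset.sum_congr rfl fun r hr => ?_
        exact Finset.sum_equiv (Equiv.mulRight₀ s⁻¹ (inv_ne_zero hs)) (by simp)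
          (fun w _ => rfl)
    _ = ∑ r ∈ Finset.univ.erase (0 : F), ∑ w : F,
          (gm act w r '' C).indicator (1 : Ω → ℝ) x := by
        refine Finset.sum_equiv (Equiv.mulLeft₀ s⁻¹ (inv_ne_zero hs))
          (fun r => ?_) (fun r _ => rfl)
        simp [Finset.mem_erase, mul_eq_zero, inv_eq_zero, hs]


variable [IsProbabilityMeasure μ]

lemma ergodic_group_average
    (herg : ∀ S : Set Ω, MeasurableSet S → (∀ u : F, act.TA u ⁻¹' S = S) →
      (∀ u : F, u ≠ 0 → act.TM u ⁻¹' S = S) → μ S = 0 ∨ μ S = 1)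
    {C : Set Ω} (hC : MeasurableSet C) :
    ∑ r ∈ Finset.univ.erase (0 : F), ∑ w : F, (μ (C ∩ gm act w r '' C)).toReal ≤
      ((Fintype.card F * (Finset.univ.erase (0 : F)).card : ℕ) : ℝ)
        * (μ C).toReal * (μ C).toReal := by
  classical
  set E := Finset.univ.erase (0 : F) with hE
  set m := (μ C).toReal with hm
  set K : ℝ := ((Fintype.card F * E.card : ℕ) : ℝ) * m with hK
  have hgmmeas : ∀ r ∈ E, ∀ w : F, MeasurableSet (gm act w r '' C) := fun r hr w =>
    gm_image_measurableSet act w r (Finset.ne_of_mem_erase hr) hC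
  have hindint : ∀ (s : Set Ω), MeasurableSet s →
      Integrable (s.indicator (1 : Ω → ℝ)) μ :=
    fun s hs => (integrable_const (1 : ℝ)).indicator hs
  have hHmeas : Measurable (Hf act C) := by
    unfold Hf
    apply Finset.measurable_sum
    intro r hr
    apply Finset.measurable_sum
    intro w _
    exact measurable_const.indicator (hgmmeas r hr w)
  have hHint : Integrable (Hf act C) μ := by
    unfold Hf
    exact integrable_finset_sum _ fun r hr =>
      integrable_finset_sum _ fun w _ => hindint _ (hgmmeas r hr w)
  have hint_gm : ∀ r ∈ E, ∀ w : F,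
      ∫ x, (gm act w r '' C).indicator (1 : Ω → ℝ) x ∂μ = m := by
    intro r hr w
    rw [integral_indicator_one (hgmmeas r hr w), measureReal_def,
      measure_gm_image act w r (Finset.ne_of_mem_erase hr) hC]
  have hHint_eq : ∫ x, Hf act C x ∂μ = K := by
    unfold Hf
    calc ∫ x, ∑ r ∈ E, ∑ w : F, (gm act w r '' C).indicator (1 : Ω → ℝ) x ∂μ
        = ∑ r ∈ E, ∫ x, ∑ w : F, (gm act w r '' C).indicator (1 : Ω → ℝ) x ∂μ :=
          integral_finset_sum _ (fun r hr =>
            integrable_finset_sum _ fun w _ => hindint _ (hgmmeas r hr w))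
      _ = ∑ r ∈ E, ∑ w : F, ∫ x, (gm act w r '' C).indicator (1 : Ω → ℝ) x ∂μ :=
          Finset.sum_congr rfl fun r hr =>
            integral_finset_sum _ (fun w _ => hindint _ (hgmmeas r hr w))
      _ = ∑ r ∈ E, ∑ w : F, m :=
          Finset.sum_congr rfl fun r hr => Finset.sum_congr rfl fun w _ => hint_gm r hr w
      _ = K := by
          simp only [Finset.sum_const, Finset.card_univ, nsmul_eq_mul, hK]
          push_cast
          ring
  set S : Set Ω := {x | K < Hf act C x} with hSdef
  have hSmeas : MeasurableSet S := measurableSet_lt measurable_const hHmeas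
  have hSTA : ∀ t : F, act.TA t ⁻¹' S = S := by
    intro t; ext x
    simp only [Set.mem_preimage, hSdef, Set.mem_setOf_eq, Hf_TA]
  have hSTM : ∀ s : F, s ≠ 0 → act.TM s ⁻¹' S = S := by
    intro s hs; ext x
    simp only [Set.mem_preimage, hSdef, Set.mem_setOf_eq, Hf_TM act C s hs]
  have hbound : ∀ᵐ x ∂μ, Hf act C x ≤ K := by
    rcases herg S hSmeas hSTA hSTM with h0 | h1
    · have hae : ∀ᵐ x ∂μ, x ∉ S := measure_eq_zero_iff_ae_notMem.mp h0
      filter_upwards [hae] with x hx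
      simpa [hSdef, not_lt] using hx
    · exfalso
      have hcompl : μ Sᶜ = 0 := (prob_compl_eq_zero_iff hSmeas).mpr h1
      have hmem : ∀ᵐ x ∂μ, x ∈ S := by
        have := measure_eq_zero_iff_ae_notMem.mp hcompl
        filter_upwards [this] with x hx
        simpa using hx
      have hsub : Integrable (fun x => Hf act C x - K) μ := hHint.sub (integrable_const K)
      have hz : ∫ x, (Hf act C x - K) ∂μ = 0 := by
        rw [integral_sub hHint (integrable_const K), hHint_eq, integral_const]
        simp
      have hnn : 0 ≤ᵐ[μ] fun x => Hf act C x - K := by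
        filter_upwards [hmem] with x hx
        simp only [hSdef, Set.mem_setOf_eq] at hx
        simp only [Pi.zero_apply]
        linarith
      have heq0 := (integral_eq_zero_iff_of_nonneg_ae hnn hsub).mp hz
      haveI : (ae μ).NeBot := ae_neBot.mpr (IsProbabilityMeasure.ne_zero μ)
      obtain ⟨x, hx1, hx2⟩ := (heq0.and hmem).exists
      simp only [hSdef, Set.mem_setOf_eq, Pi.zero_apply] at hx1 hx2
      linarith
  have hprod_eq : ∀ x, C.indicator (1 : Ω → ℝ) x * Hf act C x
      = ∑ r ∈ E, ∑ w : F, (C ∩ gm act w r '' C).indicator (1 : Ω → ℝ) x := by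
    intro x
    unfold Hf
    rw [Finset.mul_sum]
    refine Finset.sum_congr rfl fun r hr => ?_
    rw [Finset.mul_sum]
    refine Finset.sum_congr rfl fun w _ => ?_
    rw [Set.inter_indicator_one]
    rfl
  have hint_prod : Integrable (fun x => C.indicator (1 : Ω → ℝ) x * Hf act C x) μ := by
    rw [show (fun x => C.indicator (1 : Ω → ℝ) x * Hf act C x)
        = fun x => ∑ r ∈ E, ∑ w : F, (C ∩ gm act w r '' C).indicator (1 : Ω → ℝ) x
      from funext hprod_eq]
    exact integrable_finset_sum _ fun r hr =>
      integrable_finset_sum _ fun w _ => hindint _ (hC.inter (hgmmeas r hr w))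
  have hintC : Integrable (C.indicator (1 : Ω → ℝ)) μ := hindint _ hC
  have hfinal : ∫ x, C.indicator (1 : Ω → ℝ) x * Hf act C x ∂μ ≤ K * m := by
    have hle : (fun x => C.indicator (1 : Ω → ℝ) x * Hf act C x)
        ≤ᵐ[μ] fun x => C.indicator (1 : Ω → ℝ) x * K := by
      filter_upwards [hbound] with x hx
      exact mul_le_mul_of_nonneg_left hx (Set.indicator_nonneg (fun _ _ => zero_le_one) x)
    calc ∫ x, C.indicator (1 : Ω → ℝ) x * Hf act C x ∂μ
        ≤ ∫ x, C.indicator (1 : Ω → ℝ) x * K ∂μ :=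
          integral_mono_ae hint_prod (hintC.mul_const K) hle
      _ = m * K := by rw [integral_mul_const, integral_indicator_one hC, measureReal_def]
      _ = K * m := mul_comm _ _
  calc ∑ r ∈ E, ∑ w : F, (μ (C ∩ gm act w r '' C)).toReal
      = ∑ r ∈ E, ∑ w : F, ∫ x, (C ∩ gm act w r '' C).indicator (1 : Ω → ℝ) x ∂μ :=
        Finset.sum_congr rfl fun r hr => Finset.sum_congr rfl fun w _ =>
          (integral_indicator_one (hC.inter (hgmmeas r hr w))).symm
    _ = ∫ x, ∑ r ∈ E, ∑ w : F, (C ∩ gm act w r '' C).indicator (1 : Ω → ℝ) x ∂μ := by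
        rw [integral_finset_sum _ (fun r hr =>
          integrable_finset_sum _ fun w _ => hindint _ (hC.inter (hgmmeas r hr w)))]
        exact Finset.sum_congr rfl fun r hr =>
          (integral_finset_sum _ fun w _ => hindint _ (hC.inter (hgmmeas r hr w))).symm
    _ = ∫ x, C.indicator (1 : Ω → ℝ) x * Hf act C x ∂μ :=
        integral_congr_ae (Filter.EventuallyEq.symm (Filter.Eventually.of_forall hprod_eq))
    _ ≤ K * m := hfinal


lemma double_sum_bound
    (herg : ∀ S : Set Ω, MeasurableSet S → (∀ u : F, act.TA u ⁻¹' S = S) →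
      (∀ u : F, u ≠ 0 → act.TM u ⁻¹' S = S) → μ S = 0 ∨ μ S = 1)
    {C : Set Ω} (hC : MeasurableSet C) :
    ∑ u ∈ Finset.univ.erase (0 : F), ∑ v ∈ Finset.univ.erase (0 : F),
        (μ (tm act u '' C ∩ tm act v '' C)).toReal
      ≤ 2 * (((Finset.univ.erase (0 : F)).card : ℝ) * (μ C).toReal)
        + ((Fintype.card F * (Finset.univ.erase (0 : F)).card : ℕ) : ℝ)
          * (μ C).toReal * (μ C).toReal := by
  classical
  set E := Finset.univ.erase (0 : F) with hE
  set m := (μ C).toReal with hm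
  set φ : F → F → ℝ := fun w r => (μ (C ∩ gm act w r '' C)).toReal with hφ
  have hφnonneg : ∀ w r, 0 ≤ φ w r := fun w r => ENNReal.toReal_nonneg
  have hφle : ∀ w r, φ w r ≤ m := by
    intro w r
    exact ENNReal.toReal_mono (measure_ne_top μ C)
      (measure_mono Set.inter_subset_left)
  have hmnonneg : 0 ≤ m := ENNReal.toReal_nonneg
  have step1 : ∀ u ∈ E, ∑ v ∈ E, (μ (tm act u '' C ∩ tm act v '' C)).toReal
      = ∑ r ∈ E, φ (u - u * (r * r)) r := by
    intro u hu
    have hu0 : u ≠ 0 := Finset.ne_of_mem_erase hu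
    calc ∑ v ∈ E, (μ (tm act u '' C ∩ tm act v '' C)).toReal
        = ∑ v ∈ E, φ (u - u⁻¹ * v * v) (u⁻¹ * v) := by
          refine Finset.sum_congr rfl fun v hv => ?_
          rw [measure_tm_inter act u v hu0 (Finset.ne_of_mem_erase hv) hC]
      _ = ∑ r ∈ E, φ (u - u⁻¹ * (u * r) * (u * r)) (u⁻¹ * (u * r)) := by
          refine (Finset.sum_equiv (Equiv.mulLeft₀ u hu0) (fun r => ?_) (fun r _ => rfl)).symm
          simp [hE, Finset.mem_erase, mul_eq_zero, hu0]
      _ = ∑ r ∈ E, φ (u - u * (r * r)) r := by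
          refine Finset.sum_congr rfl fun r hr => ?_
          have h1 : u⁻¹ * (u * r) = r := inv_mul_cancel_left₀ hu0 r
          have h2 : u - u⁻¹ * (u * r) * (u * r) = u - u * (r * r) := by
            rw [h1]; ring
          rw [h2, h1]
  have step2 : ∀ r ∈ E, ∑ u ∈ E, φ (u - u * (r * r)) r
      ≤ (if r * r = 1 then (E.card : ℝ) * m else 0) + ∑ w : F, φ w r := by
    intro r hr
    by_cases h1 : r * r = 1
    · rw [if_pos h1]
      have : ∑ u ∈ E, φ (u - u * (r * r)) r = ∑ u ∈ E, φ 0 r := by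
        refine Finset.sum_congr rfl fun u _ => ?_
        rw [h1, mul_one, sub_self]
      rw [this, Finset.sum_const, nsmul_eq_mul]
      have h2 : (E.card : ℝ) * φ 0 r ≤ (E.card : ℝ) * m :=
        mul_le_mul_of_nonneg_left (hφle 0 r) (Nat.cast_nonneg _)
      have h3 : 0 ≤ ∑ w : F, φ w r :=
        Finset.sum_nonneg fun w _ => hφnonneg w r
      linarith
    · rw [if_neg h1]
      have hne : (1 : F) - r * r ≠ 0 := by
        intro h
        exact h1 (by linear_combination -h)
      have hinj : Set.InjOn (fun u : F => u - u * (r * r)) E := by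
        intro a _ b _ hab
        simp only at hab
        have : a * (1 - r * r) = b * (1 - r * r) := by ring_nf; ring_nf at hab; linear_combination hab
        exact mul_right_cancel₀ hne this
      have himg : ∑ u ∈ E, φ (u - u * (r * r)) r
          = ∑ w ∈ E.image (fun u : F => u - u * (r * r)), φ w r :=
        (Finset.sum_image (f := fun w => φ w r) (g := fun u : F => u - u * (r * r))
          (fun a ha b hb hab => hinj ha hb hab)).symm
      rw [himg]
      have : ∑ w ∈ E.image (fun u : F => u - u * (r * r)), φ w r ≤ ∑ w : F, φ w r :=
        Finset.sum_le_sum_of_subset_of_nonneg (Finset.subset_univ _)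
          (fun w _ _ => hφnonneg w r)
      linarith
  have hcardfilter : ((E.filter (fun r => r * r = 1)).card : ℝ) ≤ 2 := by
    have hsub : E.filter (fun r => r * r = 1) ⊆ ({1, -1} : Finset F) := by
      intro r hrmem
      have := (Finset.mem_filter.mp hrmem).2
      rcases mul_self_eq_one_iff.mp this with h | h <;> simp [h]
    have := Finset.card_le_card hsub
    have hc2 : ({1, -1} : Finset F).card ≤ 2 := by
      apply le_trans (Finset.card_insert_le _ _)
      simp
    have : (E.filter (fun r => r * r = 1)).card ≤ 2 := le_trans ‹_› hc2
    exact_mod_cast this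
  calc ∑ u ∈ E, ∑ v ∈ E, (μ (tm act u '' C ∩ tm act v '' C)).toReal
      = ∑ u ∈ E, ∑ r ∈ E, φ (u - u * (r * r)) r := Finset.sum_congr rfl step1
    _ = ∑ r ∈ E, ∑ u ∈ E, φ (u - u * (r * r)) r := Finset.sum_comm
    _ ≤ ∑ r ∈ E, ((if r * r = 1 then (E.card : ℝ) * m else 0) + ∑ w : F, φ w r) :=
        Finset.sum_le_sum step2
    _ = (∑ r ∈ E, if r * r = 1 then (E.card : ℝ) * m else 0)
          + ∑ r ∈ E, ∑ w : F, φ w r := Finset.sum_add_distrib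
    _ ≤ 2 * ((E.card : ℝ) * m)
          + ((Fintype.card F * E.card : ℕ) : ℝ) * m * m := by
        have hA : (∑ r ∈ E, if r * r = 1 then (E.card : ℝ) * m else 0)
            = ((E.filter (fun r => r * r = 1)).card : ℝ) * ((E.card : ℝ) * m) := by
          rw [← Finset.sum_filter, Finset.sum_const, nsmul_eq_mul]
        have hEm : 0 ≤ (E.card : ℝ) * m := mul_nonneg (Nat.cast_nonneg _) hmnonneg
        have hB : ∑ r ∈ E, ∑ w : F, φ w r
            ≤ ((Fintype.card F * E.card : ℕ) : ℝ) * m * m := by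
          have := ergodic_group_average act herg hC
          rw [← hE, ← hm] at this
          calc ∑ r ∈ E, ∑ w : F, φ w r
              = ∑ r ∈ E, ∑ w : F, (μ (C ∩ gm act w r '' C)).toReal := rfl
            _ ≤ _ := this
        have hA' : (∑ r ∈ E, if r * r = 1 then (E.card : ℝ) * m else 0)
            ≤ 2 * ((E.card : ℝ) * m) := by
          rw [hA]
          exact mul_le_mul_of_nonneg_right hcardfilter hEm
        linarith

end Fin

end FFER

open FFER in
/-- Ergodic finite field recurrence: if the affine group of a finite field `F` acts
ergodically on a probability space and `μ(B)μ(C) > 6/|F*|`, then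
`μ(B ∩ M_u A_{-u} C) > 0` for some `u ∈ F*`; moreover the averaged bound
`(1/|F*|) ∑_{u ∈ F*} μ(B ∩ M_u A_{-u} C) ≥ μ(B)μ(C) - √(6 μ(B)μ(C)/|F*|)` holds. -/
theorem finite_field_ergodic_recurrence {F : Type*} [Field F] [Fintype F] [DecidableEq F]
    {Ω : Type*} [MeasurableSpace Ω] {μ : Measure Ω} [IsProbabilityMeasure μ]
    (act : AffineAction F μ)
    (herg : ∀ S : Set Ω, MeasurableSet S → (∀ u : F, act.TA u ⁻¹' S = S) →
      (∀ u : F, u ≠ 0 → act.TM u ⁻¹' S = S) → μ S = 0 ∨ μ S = 1)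
    (B C : Set Ω) (hB : MeasurableSet B) (hC : MeasurableSet C) :
    ((6 : ℝ) / (Fintype.card F - 1) < (μ B).toReal * (μ C).toReal →
      ∃ u : F, u ≠ 0 ∧ 0 < μ (B ∩ (act.TM u ∘ act.TA (-u)) '' C)) ∧
    (μ B).toReal * (μ C).toReal -
        Real.sqrt (6 * ((μ B).toReal * (μ C).toReal) / (Fintype.card F - 1)) ≤
      ((Fintype.card F - 1 : ℝ))⁻¹ *
        ∑ u ∈ Finset.univ.erase (0 : F), (μ (B ∩ (act.TM u ∘ act.TA (-u)) '' C)).toReal := by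
  classical
  have hsetseq : ∀ u : F, (act.TM u ∘ act.TA (-u)) '' C = tm act u '' C := fun u => rfl
  simp only [hsetseq]
  set E := Finset.univ.erase (0 : F) with hE
  set m := (μ C).toReal with hm
  set b := (μ B).toReal with hb
  have hq : 1 < Fintype.card F := Fintype.one_lt_card
  have hEcard : E.card = Fintype.card F - 1 := by
    rw [hE, Finset.card_erase_of_mem (Finset.mem_univ 0), Finset.card_univ]
  set Nr : ℝ := (E.card : ℝ) with hNr
  have hNrcast : ((Fintype.card F : ℝ) - 1) = Nr := by
    rw [hNr, hEcard, Nat.cast_sub (by omega), Nat.cast_one]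
  have hNr1 : (1 : ℝ) ≤ Nr := by
    rw [hNr]
    have h1 : 1 ≤ E.card := by rw [hEcard]; omega
    exact_mod_cast h1
  have hNr0 : (0 : ℝ) < Nr := lt_of_lt_of_le one_pos hNr1
  have hm0 : 0 ≤ m := ENNReal.toReal_nonneg
  have hb0 : 0 ≤ b := ENNReal.toReal_nonneg
  have hm1 : m ≤ 1 := by
    have h1 : (μ C).toReal ≤ (1 : ℝ≥0∞).toReal :=
      ENNReal.toReal_mono ENNReal.one_ne_top prob_le_one
    simpa using h1
  have htmmeas : ∀ u ∈ E, MeasurableSet (tm act u '' C) := fun u hu =>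
    tm_image_measurableSet act u (Finset.ne_of_mem_erase hu) hC
  have hindint : ∀ s : Set Ω, MeasurableSet s → Integrable (s.indicator (1 : Ω → ℝ)) μ :=
    fun s hs => (integrable_const (1 : ℝ)).indicator hs
  set G : Ω → ℝ := fun x => ∑ u ∈ E, (tm act u '' C).indicator (1 : Ω → ℝ) x with hG
  have hGint : Integrable G μ := by
    simp only [hG]
    exact integrable_finset_sum _ fun u hu => hindint _ (htmmeas u hu)
  have hintG : ∫ x, G x ∂μ = Nr * m := by
    simp only [hG]
    rw [integral_finset_sum _ fun u hu => hindint _ (htmmeas u hu)]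
    have h1 : ∀ u ∈ E, ∫ x, (tm act u '' C).indicator (1 : Ω → ℝ) x ∂μ = m := fun u hu => by
      rw [integral_indicator_one (htmmeas u hu), measureReal_def,
        measure_tm_image act u (Finset.ne_of_mem_erase hu) hC]
    rw [Finset.sum_congr rfl h1, Finset.sum_const, nsmul_eq_mul]
  have hGG : ∀ x, G x * G x
      = ∑ u ∈ E, ∑ v ∈ E, (tm act u '' C ∩ tm act v '' C).indicator (1 : Ω → ℝ) x := by
    intro x
    simp only [hG]
    rw [Finset.sum_mul_sum]
    refine Finset.sum_congr rfl fun u _ => Finset.sum_congr rfl fun v _ => ?_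
    rw [Set.inter_indicator_one]
    rfl
  have hGGint : Integrable (fun x => ∑ u ∈ E, ∑ v ∈ E,
      (tm act u '' C ∩ tm act v '' C).indicator (1 : Ω → ℝ) x) μ :=
    integrable_finset_sum _ fun u hu => integrable_finset_sum _ fun v hv =>
      hindint _ ((htmmeas u hu).inter (htmmeas v hv))
  have hintGG : ∫ x, ∑ u ∈ E, ∑ v ∈ E,
        (tm act u '' C ∩ tm act v '' C).indicator (1 : Ω → ℝ) x ∂μ
      = ∑ u ∈ E, ∑ v ∈ E, (μ (tm act u '' C ∩ tm act v '' C)).toReal := by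
    rw [integral_finset_sum _ fun u hu => integrable_finset_sum _ fun v hv =>
      hindint _ ((htmmeas u hu).inter (htmmeas v hv))]
    refine Finset.sum_congr rfl fun u hu => ?_
    rw [integral_finset_sum _ fun v hv => hindint _ ((htmmeas u hu).inter (htmmeas v hv))]
    exact Finset.sum_congr rfl fun v hv =>
      integral_indicator_one ((htmmeas u hu).inter (htmmeas v hv))
  have hsqint : Integrable (fun x => (G x - Nr * m) ^ 2) μ := by
    have h1 : (fun x => (G x - Nr * m) ^ 2) = fun x =>
        (∑ u ∈ E, ∑ v ∈ E, (tm act u '' C ∩ tm act v '' C).indicator (1 : Ω → ℝ) x)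
          - 2 * (Nr * m) * G x + (Nr * m) ^ 2 := by
      funext x
      rw [← hGG x]
      ring
    rw [h1]
    exact (hGGint.sub (hGint.const_mul (2 * (Nr * m)))).add (integrable_const _)
  have hvar : ∫ x, (G x - Nr * m) ^ 2 ∂μ ≤ 3 * Nr * m := by
    have h1 : (fun x => (G x - Nr * m) ^ 2) = fun x =>
        (∑ u ∈ E, ∑ v ∈ E, (tm act u '' C ∩ tm act v '' C).indicator (1 : Ω → ℝ) x)
          - 2 * (Nr * m) * G x + (Nr * m) ^ 2 := by
      funext x
      rw [← hGG x]
      ring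
    have hint1 : Integrable (fun x =>
        (∑ u ∈ E, ∑ v ∈ E, (tm act u '' C ∩ tm act v '' C).indicator (1 : Ω → ℝ) x)
          - 2 * (Nr * m) * G x) μ := hGGint.sub (hGint.const_mul (2 * (Nr * m)))
    rw [h1, integral_add hint1 (integrable_const _),
      integral_sub hGGint (hGint.const_mul (2 * (Nr * m))), integral_const_mul, hintG, hintGG,
      integral_const]
    simp only [measure_univ, probReal_univ, ENNReal.toReal_one, smul_eq_mul, one_mul]
    have hD := double_sum_bound act herg hC
    rw [← hE, ← hm] at hD
    have hq' : (Fintype.card F : ℝ) = Nr + 1 := by linarith [hNrcast]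
    have hqN : ((Fintype.card F * E.card : ℕ) : ℝ) = (Nr + 1) * Nr := by
      push_cast
      rw [hq', ← hNr]
    rw [hqN] at hD
    have hmsq : m * m ≤ m := by nlinarith
    nlinarith [mul_le_mul_of_nonneg_left hmsq hNr0.le]
  set Ssum := ∑ u ∈ E, (μ (B ∩ tm act u '' C)).toReal with hSsum
  have hSnonneg : 0 ≤ Ssum := Finset.sum_nonneg fun u _ => ENNReal.toReal_nonneg
  have hBint : Integrable (B.indicator (1 : Ω → ℝ)) μ := hindint _ hB
  have hprod : (fun x => B.indicator (1 : Ω → ℝ) x * (Nr * m - G x))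
      = fun x => Nr * m * B.indicator (1 : Ω → ℝ) x
        - ∑ u ∈ E, (B ∩ tm act u '' C).indicator (1 : Ω → ℝ) x := by
    funext x
    have h1 : B.indicator (1 : Ω → ℝ) x * G x
        = ∑ u ∈ E, (B ∩ tm act u '' C).indicator (1 : Ω → ℝ) x := by
      simp only [hG]
      rw [Finset.mul_sum]
      exact Finset.sum_congr rfl fun u hu => by rw [Set.inter_indicator_one]; rfl
    rw [mul_sub, h1]
    ring
  have hBprodint : Integrable (fun x => B.indicator (1 : Ω → ℝ) x * (Nr * m - G x)) μ := by
    rw [hprod]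
    exact (hBint.const_mul _).sub
      (integrable_finset_sum _ fun u hu => hindint _ (hB.inter (htmmeas u hu)))
  have hintBprod : ∫ x, B.indicator (1 : Ω → ℝ) x * (Nr * m - G x) ∂μ = Nr * m * b - Ssum := by
    rw [hprod, integral_sub (hBint.const_mul (Nr * m))
        (integrable_finset_sum _ fun u hu => hindint _ (hB.inter (htmmeas u hu))),
      integral_const_mul, integral_indicator_one hB,
      integral_finset_sum _ fun u hu => hindint _ (hB.inter (htmmeas u hu))]
    rw [hSsum]
    congr 1
    exact Finset.sum_congr rfl fun u hu => integral_indicator_one (hB.inter (htmmeas u hu))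
  have hkey : ∀ lam : ℝ, 0 < lam → Nr * m * b - Ssum ≤ lam / 2 * b + (3 * Nr * m) / (2 * lam) := by
    intro lam hlam
    have h2lam : (0 : ℝ) < 2 * lam := by positivity
    have hpt : ∀ x, B.indicator (1 : Ω → ℝ) x * (Nr * m - G x)
        ≤ lam / 2 * B.indicator (1 : Ω → ℝ) x + (G x - Nr * m) ^ 2 / (2 * lam) := by
      intro x
      by_cases hx : x ∈ B
      · rw [Set.indicator_of_mem hx]
        simp only [Pi.one_apply, one_mul, mul_one]
        have h3 : Nr * m - G x - lam / 2 ≤ (G x - Nr * m) ^ 2 / (2 * lam) := by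
          rw [le_div_iff₀ h2lam]
          nlinarith [sq_nonneg (G x - Nr * m + lam)]
        linarith
      · rw [Set.indicator_of_notMem hx]
        simp only [zero_mul, mul_zero, zero_add]
        positivity
    have hRint : Integrable (fun x => lam / 2 * B.indicator (1 : Ω → ℝ) x
        + (G x - Nr * m) ^ 2 / (2 * lam)) μ :=
      (hBint.const_mul _).add (hsqint.div_const _)
    have hmono := integral_mono hBprodint hRint hpt
    rw [hintBprod] at hmono
    have hR : ∫ x, (lam / 2 * B.indicator (1 : Ω → ℝ) x
        + (G x - Nr * m) ^ 2 / (2 * lam)) ∂μ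
        = lam / 2 * b + (∫ x, (G x - Nr * m) ^ 2 ∂μ) / (2 * lam) := by
      rw [integral_add (hBint.const_mul (lam / 2)) (hsqint.div_const (2 * lam)),
        integral_const_mul, integral_indicator_one hB, measureReal_def, integral_div]
    rw [hR] at hmono
    have hmono2 : (∫ x, (G x - Nr * m) ^ 2 ∂μ) / (2 * lam) ≤ (3 * Nr * m) / (2 * lam) :=
      (div_le_div_iff_of_pos_right h2lam).mpr hvar
    linarith
  have hmain : Nr * m * b - Real.sqrt (3 * Nr * m * b) ≤ Ssum := by
    rcases eq_or_lt_of_le (mul_nonneg hm0 hb0) with h0 | hpos2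
    · have h00 : m * b = 0 := h0.symm
      have e1 : Nr * m * b = 0 := by rw [mul_assoc, h00, mul_zero]
      have e2 : Real.sqrt (3 * Nr * m * b) = 0 := by
        rw [show 3 * Nr * m * b = 3 * Nr * (m * b) by ring, h00, mul_zero, Real.sqrt_zero]
      rw [e1, e2]
      simpa using hSnonneg
    · have hmpos : 0 < m := by
        rcases hm0.lt_or_eq with h | h
        · exact h
        · exfalso; rw [← h] at hpos2; simp at hpos2
      have hbpos : 0 < b := by
        rcases hb0.lt_or_eq with h | h
        · exact h
        · exfalso; rw [← h] at hpos2; simp at hpos2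
      have hPpos : (0 : ℝ) < 3 * Nr * m * b := by positivity
      set lam := Real.sqrt (3 * Nr * m * b) / b with hlam
      have hsq : Real.sqrt (3 * Nr * m * b) * Real.sqrt (3 * Nr * m * b) = 3 * Nr * m * b :=
        Real.mul_self_sqrt hPpos.le
      have hsppos : 0 < Real.sqrt (3 * Nr * m * b) := Real.sqrt_pos.mpr hPpos
      have hlampos : 0 < lam := div_pos hsppos hbpos
      have h1 := hkey lam hlampos
      have hlb : lam * b = Real.sqrt (3 * Nr * m * b) := by
        rw [hlam, div_mul_cancel₀ _ hbpos.ne']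
      have e1 : lam / 2 * b = Real.sqrt (3 * Nr * m * b) / 2 := by
        rw [div_mul_eq_mul_div, hlb]
      have h2lam' : (0 : ℝ) < 2 * lam := by positivity
      have e2 : 3 * Nr * m / (2 * lam) = Real.sqrt (3 * Nr * m * b) / 2 := by
        rw [div_eq_div_iff h2lam'.ne' (by norm_num : (2:ℝ) ≠ 0), hlam,
          show Real.sqrt (3 * Nr * m * b) * (2 * (Real.sqrt (3 * Nr * m * b) / b))
            = Real.sqrt (3 * Nr * m * b) * Real.sqrt (3 * Nr * m * b) * (2 / b) from by
              ring, hsq]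
        field_simp [hbpos.ne']
      linarith
  clear_value G Ssum m b Nr
  constructor
  · intro h6
    rw [hNrcast] at h6
    have h6' : 6 < Nr * (b * m) := by
      rw [div_lt_iff₀ hNr0] at h6
      rw [mul_comm Nr (b * m)]
      exact h6
    have h6'' : 6 < Nr * m * b := by
      rw [show Nr * m * b = Nr * (b * m) by ring]
      exact h6'
    have hpos : 0 < Nr * m * b := by linarith only [h6'']
    have hlt : Real.sqrt (3 * Nr * m * b) < Nr * m * b := by
      rw [show (3 : ℝ) * Nr * m * b = 3 * (Nr * m * b) by ring]
      refine (Real.sqrt_lt' hpos).mpr ?_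
      calc 3 * (Nr * m * b) < (Nr * m * b) * (Nr * m * b) :=
            mul_lt_mul_of_pos_right (by linarith only [h6'']) hpos
        _ = (Nr * m * b) ^ 2 := by ring
    have hSpos : 0 < Ssum := by linarith only [hmain, hlt]
    obtain ⟨u, hu, hupos⟩ : ∃ u ∈ E, 0 < (μ (B ∩ tm act u '' C)).toReal := by
      by_contra hcon
      push_neg at hcon
      have hle : Ssum ≤ 0 := by
        rw [hSsum]
        exact Finset.sum_nonpos fun u hu => hcon u hu
      linarith only [hSpos, hle]
    refine ⟨u, Finset.ne_of_mem_erase hu, ?_⟩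
    have hne : μ (B ∩ tm act u '' C) ≠ 0 := by
      intro h0
      rw [h0] at hupos
      simp at hupos
    exact pos_iff_ne_zero.mpr hne
  · rw [hNrcast]
    have hdiv : Nr⁻¹ * Real.sqrt (3 * Nr * m * b) ≤ Real.sqrt (6 * (b * m) / Nr) := by
      have h1 : Nr⁻¹ * Real.sqrt (3 * Nr * m * b)
          = Real.sqrt ((Nr⁻¹) ^ 2 * (3 * Nr * m * b)) := by
        rw [Real.sqrt_mul (sq_nonneg _), Real.sqrt_sq (inv_nonneg.mpr hNr0.le)]
      rw [h1]
      apply Real.sqrt_le_sqrt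
      have h2 : (Nr⁻¹) ^ 2 * (3 * Nr * m * b) = 3 * (b * m) / Nr := by
        field_simp
      rw [h2]
      have hbm : (0 : ℝ) ≤ b * m := mul_nonneg hb0 hm0
      exact (div_le_div_iff_of_pos_right hNr0).mpr (by linarith only [hbm])
    have h2 : Nr⁻¹ * (Nr * m * b) = m * b := by
      field_simp
    have h3 : Nr⁻¹ * (Nr * m * b) - Nr⁻¹ * Real.sqrt (3 * Nr * m * b) ≤ Nr⁻¹ * Ssum := by
      have h4 := mul_le_mul_of_nonneg_left hmain (inv_nonneg.mpr hNr0.le)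
      rw [mul_sub] at h4
      linarith only [h4]
    rw [h2] at h3
    have hfin : b * m - Real.sqrt (6 * (b * m) / Nr) ≤ Nr⁻¹ * Ssum := by
      linarith only [h3, hdiv]
    exact hfin
end
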